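/- In the auxiliary hypergraph H1 built from K^{(k)}_{n,…,n} (with k ≥ 2), with d = n^{k²+1}/2 there is a constant c depending only on k such that: every pair of distinct tiles of H1 is contained in at most c·d/n conflicts of 𝒞 of size 3 and in at most c·d²/n conflicts of 𝒞 of size 4, and every triple of distinct tiles of H1 is contained in at most c·d/n conflicts of 𝒞 of size 4; in particular, Δ_{j'}(𝒞^{(j)}) ≤ d^{j−j'−ε} for all j ∈ {3,4}, 2 ≤ j' ≤ j−1, any ε ∈ (0, 1/(k²+2)), and sufficiently large n. -/

import Mathlib

open Finset

/-- The vertex set of `K^{(k)}_{n,…,n}`: pairs `(p, v)` where `p` indexes the part and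
`v` the vertex within part `X_p`. -/
abbrev HVtx (n k : ℕ) := Fin k × Fin n

/-- The color set `N₁`, of size `⌈n/2⌉`. -/
abbrev ColK (n : ℕ) := Fin ((n + 1) / 2)

/-- The vertex set of the auxiliary hypergraph `H₁`: the set `A` of `k`-element vertex
sets of the form `a ∪ {u}` with `a ∈ A_{k−1}` (encoded simply as finsets of vertices),
together with the set `B` of pairs `{i} ∪ a` of a color `i ∈ N₁` and a set `a ∈ A_{k−1}`. -/
abbrev VHK (n k : ℕ) := Finset (HVtx n k) ⊕ (ColK n × Finset (HVtx n k))

/-- `a` has at most one vertex in each part. -/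
def PartialTrans (n k : ℕ) (a : Finset (HVtx n k)) : Prop :=
  ∀ x ∈ a, ∀ y ∈ a, x.1 = y.1 → x = y

/-- `a ∈ A_{k−1}`: a `(k−1)`-element vertex set with at most one vertex from each part. -/
def IsA' (n k : ℕ) (a : Finset (HVtx n k)) : Prop :=
  a.card = k - 1 ∧ PartialTrans n k a

/-- `a ∈ A`: a set of the form `a' ∪ {u}` with `a' ∈ A_{k−1}` and `u ∉ a'`. -/
def IsA (n k : ℕ) (a : Finset (HVtx n k)) : Prop :=
  a.card = k ∧ ∃ b ⊆ a, IsA' n k b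

/-- A copy `S` of `K^{(k)}_{k+1,…,k+1}` in `K^{(k)}_{n,…,n}`, with its vertices indexed,
is described by a family `f` of injections `f p : Fin (k+1) → Fin n`, one per part; the
vertex of `S` in part `p` with index `ℓ` is `(p, f p ℓ)`.  A vertex set `a` is a
*transversal of `S`* if all its vertices are vertices of `S` and their indices within
their parts are pairwise distinct. -/
def IsTransOf (n k : ℕ) (f : Fin k → Fin (k + 1) → Fin n)
    (a : Finset (HVtx n k)) : Prop :=
  ∃ g : HVtx n k → Fin (k + 1),
    (∀ x ∈ a, x.2 = f x.1 (g x)) ∧ Set.InjOn g (a : Set (HVtx n k))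

/-- The vertex set (as a subset of `V(H₁)`) of the tile `e_{S,i}`: it consists of all
`a ∈ A` with `a ⊆ V(S)` that are transversals of `S`, together with all `{i} ∪ a ∈ B`
with `a ⊆ V(S)` a transversal of `S`. -/
def tileVertsK (n k : ℕ) (i : ColK n) (f : Fin k → Fin (k + 1) → Fin n) :
    Set (VHK n k) :=
  {v | (∃ a : Finset (HVtx n k), IsA n k a ∧ IsTransOf n k f a ∧ v = Sum.inl a) ∨
       (∃ a : Finset (HVtx n k), IsA' n k a ∧ IsTransOf n k f a ∧ v = Sum.inr (i, a))}

/-- `T` is a tile of `H₁` with color `i`. -/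
def IsTileColK (n k : ℕ) (i : ColK n) (T : Finset (VHK n k)) : Prop :=
  ∃ f : Fin k → Fin (k + 1) → Fin n,
    (∀ p, Function.Injective (f p)) ∧ (T : Set (VHK n k)) = tileVertsK n k i f

/-- `T` is a tile of `H₁`. -/
def IsTileK (n k : ℕ) (T : Finset (VHK n k)) : Prop :=
  ∃ i : ColK n, IsTileColK n k i T

/-- The edge of `K^{(k)}_{n,…,n}` choosing vertex `e p` in each part `p`, as a vertex
set. -/
def edgeOf (n k : ℕ) (e : Fin k → Fin n) : Finset (HVtx n k) :=
  Finset.univ.image fun p => (p, e p)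

/-- The conflict system `𝒞` for `H₁`: `C ∈ 𝒞` iff `C` is a matching of three or four
distinct tiles `{e_{S,i}, e_{S',i}, e_{T,j}, e_{T',j}}` with distinct colors `i ≠ j`, for
which there are two distinct parts `p ≠ q`, a base edge `e`, and alternative vertices
`a ≠ e p` in part `p` and `b ≠ e q` in part `q`, such that the four edges of the
corresponding copy of `K_{1,…,1,2,2}` belong (as vertices of `H₁`) to the four tiles as
indicated; such a set corresponds to a copy of `K_{1,…,1,2,2}` with no odd color class. -/
def IsConflictK (n k : ℕ) (C : Finset (Finset (VHK n k))) : Prop :=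
  (C.card = 3 ∨ C.card = 4) ∧
  (∀ T ∈ C, ∀ T' ∈ C, T ≠ T' → Disjoint T T') ∧
  ∃ i j : ColK n, i ≠ j ∧ ∃ T₁ T₂ T₃ T₄ : Finset (VHK n k),
    IsTileColK n k i T₁ ∧ IsTileColK n k i T₂ ∧
    IsTileColK n k j T₃ ∧ IsTileColK n k j T₄ ∧
    C = {T₁, T₂, T₃, T₄} ∧
    ∃ p q : Fin k, p ≠ q ∧ ∃ (e : Fin k → Fin n) (a b : Fin n), e p ≠ a ∧ e q ≠ b ∧
      Sum.inl (edgeOf n k e) ∈ T₁ ∧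
      Sum.inl (edgeOf n k (Function.update (Function.update e p a) q b)) ∈ T₂ ∧
      Sum.inl (edgeOf n k (Function.update e p a)) ∈ T₃ ∧
      Sum.inl (edgeOf n k (Function.update e q b)) ∈ T₄



section helpers

lemma ncard_le_of_injOn_type {α β : Type*} [Finite β] (s : Set α) (f : α → β)
    (hf : Set.InjOn f s) : s.ncard ≤ Nat.card β := by
  have := Set.ncard_le_ncard_of_injOn f (fun a _ => Set.mem_univ (f a)) hf Set.finite_univ
  simpa [Set.ncard_univ] using this

lemma ncard_exists_le {α ι : Type*} [Finite α] [Finite ι] (S : Set ι) (P : ι → Set α) (m : ℕ)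
    (h : ∀ i ∈ S, (P i).ncard ≤ m) :
    {x | ∃ i ∈ S, x ∈ P i}.ncard ≤ S.ncard * m := by
  classical
  have : Fintype α := Fintype.ofFinite α
  have : Fintype ι := Fintype.ofFinite ι
  set X := {x | ∃ i ∈ S, x ∈ P i} with hX
  rcases X.eq_empty_or_nonempty with he | ⟨x₀, hx₀⟩
  · simp [he]
  choose σ hσ1 hσ2 using fun x (hx : x ∈ X) => hx
  haveI : Nonempty ι := ⟨σ x₀ hx₀⟩
  set σ' : α → ι := fun x => if hx : x ∈ X then σ x hx else Classical.arbitrary ι with hσ'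
  have key : X.toFinset.card ≤ m * (X.toFinset.image σ').card := by
    apply Finset.card_le_mul_card_image
    intro b hb
    have hbS : b ∈ S := by
      obtain ⟨x, hx, hxb⟩ := Finset.mem_image.mp hb
      have hxX : x ∈ X := Set.mem_toFinset.mp hx
      rw [← hxb]; simp only [σ', dif_pos hxX]; exact hσ1 x hxX
    calc (Finset.filter (fun a => σ' a = b) X.toFinset).card
        ≤ (P b).toFinset.card := by
          apply Finset.card_le_card
          intro x hx
          obtain ⟨hx1, hx2⟩ := Finset.mem_filter.mp hx
          have hxX : x ∈ X := Set.mem_toFinset.mp hx1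
          have := hσ2 x hxX
          rw [Set.mem_toFinset]
          have : σ' x = σ x hxX := by simp only [σ', dif_pos hxX]
          rw [this] at hx2; rw [← hx2]; exact hσ2 x hxX
      _ = (P b).ncard := (Set.ncard_eq_toFinset_card' _).symm
      _ ≤ m := h b hbS
  have himg : (X.toFinset.image σ').card ≤ S.ncard := by
    rw [Set.ncard_eq_toFinset_card' S]
    apply Finset.card_le_card
    intro b hb
    obtain ⟨x, hx, hxb⟩ := Finset.mem_image.mp hb
    have hxX : x ∈ X := Set.mem_toFinset.mp hx
    rw [Set.mem_toFinset, ← hxb]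
    simp only [σ', dif_pos hxX]; exact hσ1 x hxX
  calc X.ncard = X.toFinset.card := Set.ncard_eq_toFinset_card' _
    _ ≤ m * (X.toFinset.image σ').card := key
    _ ≤ m * S.ncard := by exact Nat.mul_le_mul_left m himg
    _ = S.ncard * m := Nat.mul_comm _ _

lemma ncard_pairs_le {α β : Type*} [Finite α] [Finite β] (s : Set (α × β)) (t : Set α) (m : ℕ)
    (h1 : ∀ p ∈ s, p.1 ∈ t) (h2 : ∀ a ∈ t, {b | (a, b) ∈ s}.ncard ≤ m) :
    s.ncard ≤ t.ncard * m := by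
  classical
  have : Fintype α := Fintype.ofFinite α
  have : Fintype β := Fintype.ofFinite β
  have key : s.toFinset.card ≤ m * (s.toFinset.image Prod.fst).card := by
    apply Finset.card_le_mul_card_image
    intro a ha
    have haT : a ∈ t := by
      obtain ⟨p, hp, hpa⟩ := Finset.mem_image.mp ha
      exact hpa ▸ h1 p (Set.mem_toFinset.mp hp)
    calc (Finset.filter (fun p => p.1 = a) s.toFinset).card
        ≤ {b | (a, b) ∈ s}.toFinset.card := by
          apply Finset.card_le_card_of_injOn Prod.snd
          · intro p hp
            obtain ⟨hp1, hp2⟩ := Finset.mem_filter.mp hp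
            rw [Finset.mem_coe, Set.mem_toFinset]
            have hps : p ∈ s := Set.mem_toFinset.mp hp1
            have : (a, p.2) = p := by rw [← hp2]
            simp only [Set.mem_setOf_eq, this]; exact hps
          · intro p hp p' hp' hpp'
            simp only [Finset.coe_filter, Set.mem_setOf_eq] at hp hp'
            exact Prod.ext (hp.2.trans hp'.2.symm) hpp'
      _ = {b | (a, b) ∈ s}.ncard := (Set.ncard_eq_toFinset_card' _).symm
      _ ≤ m := h2 a haT
  have himg : (s.toFinset.image Prod.fst).card ≤ t.ncard := by
    rw [Set.ncard_eq_toFinset_card' t]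
    apply Finset.card_le_card
    intro a ha
    obtain ⟨p, hp, hpa⟩ := Finset.mem_image.mp ha
    rw [Set.mem_toFinset, ← hpa]; exact h1 p (Set.mem_toFinset.mp hp)
  calc s.ncard = s.toFinset.card := Set.ncard_eq_toFinset_card' _
    _ ≤ m * (s.toFinset.image Prod.fst).card := key
    _ ≤ m * t.ncard := Nat.mul_le_mul_left m himg
    _ = t.ncard * m := Nat.mul_comm _ _

end helpers


lemma ncard_le_card_of_inj {α β : Type*} [Finite β] (s : Set α) (f : ↥s → β)
    (hf : Function.Injective f) : s.ncard ≤ Nat.card β := by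
  rw [← Nat.card_coe_set_eq]
  exact Nat.card_le_card_of_injective f hf

lemma countA {n : ℕ} (m : ℕ) (v : Fin n) :
    {g : Fin (m+1) → Fin n | ∃ ℓ, g ℓ = v}.ncard ≤ (m+1) * n^m := by
  classical
  set X := {g : Fin (m+1) → Fin n | ∃ ℓ, g ℓ = v} with hX
  have hc : ∀ g : ↥X, ∃ ℓ, g.1 ℓ = v := fun g => g.2
  choose ℓf hℓf using hc
  have key : X.ncard ≤ Nat.card (Fin (m+1) × (Fin m → Fin n)) := by
    apply ncard_le_card_of_inj X
      (fun g => (ℓf g, fun i => g.1 ((ℓf g).succAbove i)))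
    intro g g' hgg'
    obtain ⟨h1, h2⟩ := Prod.mk.injEq .. ▸ hgg'
    apply Subtype.ext
    funext j
    by_cases hj : j = ℓf g
    · rw [hj, hℓf g, h1, hℓf g']
    · obtain ⟨z, hz⟩ := Fin.exists_succAbove_eq hj
      have h3 : g.1 ((ℓf g).succAbove z) = g'.1 ((ℓf g').succAbove z) := congrFun h2 z
      rw [← hz, h3, h1]
  calc X.ncard ≤ Nat.card (Fin (m+1) × (Fin m → Fin n)) := key
    _ = (m+1) * n^m := by simp [Nat.card_eq_fintype_card]

lemma countA2 {n : ℕ} (m : ℕ) (v v' : Fin n) (hvv' : v ≠ v') :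
    {g : Fin (m+1) → Fin n | Function.Injective g ∧ (∃ ℓ, g ℓ = v) ∧ (∃ ℓ, g ℓ = v')}.ncard
      ≤ (m+1) * (m * n^(m-1)) := by
  classical
  rcases m with _ | m'
  · convert Nat.zero_le _
    rw [Set.ncard_eq_zero]
    ext g
    simp only [Set.mem_setOf_eq, Set.mem_empty_iff_false, iff_false]
    rintro ⟨hinj, ⟨ℓ, hℓ⟩, ⟨ℓ', hℓ'⟩⟩
    apply hvv'
    rw [← hℓ, ← hℓ']
    have h1 := ℓ.2
    have h2 := ℓ'.2
    exact congrArg g (Fin.ext (by omega))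
  · set Y := {h : Fin (m'+1) → Fin n | ∃ ℓ, h ℓ = v'} with hY
    set X := {g : Fin (m'+2) → Fin n |
      Function.Injective g ∧ (∃ ℓ, g ℓ = v) ∧ (∃ ℓ, g ℓ = v')} with hX
    have hc : ∀ g : ↥X, ∃ ℓ, g.1 ℓ = v := fun g => g.2.2.1
    choose ℓf hℓf using hc
    have hmem : ∀ g : ↥X, (fun i => g.1 ((ℓf g).succAbove i)) ∈ Y := by
      intro g
      obtain ⟨ℓ', hℓ'⟩ := g.2.2.2
      have hne : ℓ' ≠ ℓf g := by
        intro he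
        apply hvv'
        rw [← hℓf g, ← hℓ', he]
      obtain ⟨z, hz⟩ := Fin.exists_succAbove_eq hne
      exact ⟨z, by simp only [hz, hℓ']⟩
    have hmain : X.ncard ≤ Nat.card (Fin (m'+2) × ↥Y) := by
      apply ncard_le_card_of_inj X (fun g => (ℓf g, ⟨_, hmem g⟩))
      intro g g' hgg'
      obtain ⟨h1, h2⟩ := Prod.mk.injEq .. ▸ hgg'
      have h2' : (fun i => g.1 ((ℓf g).succAbove i)) = fun i => g'.1 ((ℓf g').succAbove i) :=
        congrArg Subtype.val h2
      apply Subtype.ext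
      funext j
      by_cases hj : j = ℓf g
      · rw [hj, hℓf g, h1, hℓf g']
      · obtain ⟨z, hz⟩ := Fin.exists_succAbove_eq hj
        have h3 : g.1 ((ℓf g).succAbove z) = g'.1 ((ℓf g').succAbove z) := congrFun h2' z
        rw [← hz, h3, h1]
    have hY' : Y.ncard ≤ (m'+1) * n^m' := countA m' v'
    calc X.ncard ≤ Nat.card (Fin (m'+2) × ↥Y) := hmain
      _ = (m'+2) * Y.ncard := by
          rw [Nat.card_prod, Nat.card_eq_fintype_card, Fintype.card_fin,
            Nat.card_coe_set_eq]
      _ ≤ (m'+2) * ((m'+1) * n^m') := Nat.mul_le_mul_left _ hY'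
      _ = (m'+1+1) * ((m'+1) * n^(m'+1-1)) := by simp

section DomainLemmas

variable {n k : ℕ}

lemma mem_edgeOf (e : Fin k → Fin n) (p : Fin k) : (p, e p) ∈ edgeOf n k e :=
  Finset.mem_image.mpr ⟨p, Finset.mem_univ p, rfl⟩

lemma edgeOf_injective : Function.Injective (edgeOf n k) := by
  intro e e' h
  funext p
  have hm := mem_edgeOf e p
  rw [h] at hm
  obtain ⟨q, _, hq⟩ := Finset.mem_image.mp hm
  obtain ⟨h1, h2⟩ := Prod.mk.injEq .. ▸ hq
  rw [← h2, h1]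

lemma tile_edge_index {i : ColK n} {f : Fin k → Fin (k+1) → Fin n} {T : Finset (VHK n k)}
    (hT : ↑T = tileVertsK n k i f) {e : Fin k → Fin n}
    (he : Sum.inl (edgeOf n k e) ∈ T) : ∃ g : Fin k → Fin (k+1), ∀ p, e p = f p (g p) := by
  have hmem : (Sum.inl (edgeOf n k e) : VHK n k) ∈ tileVertsK n k i f := by
    rw [← hT]; exact he
  rcases hmem with ⟨a, _, ⟨g, hg1, _⟩, heq⟩ | ⟨a, _, _, heq⟩
  · have ha : a = edgeOf n k e := by
      have := Sum.inl.injEq (α := Finset (HVtx n k)) (edgeOf n k e) a ▸ heq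
      exact this.symm
    refine ⟨fun p => g (p, e p), fun p => ?_⟩
    exact hg1 (p, e p) (by rw [ha]; exact mem_edgeOf e p)
  · exact absurd heq (by simp)

/-- The set of base edges whose `A`-vertex lies in `T`. -/
def edgesInK (n k : ℕ) (T : Finset (VHK n k)) : Set (Fin k → Fin n) :=
  {e | Sum.inl (edgeOf n k e) ∈ T}

lemma edgesIn_ncard {i : ColK n} {f : Fin k → Fin (k+1) → Fin n} {T : Finset (VHK n k)}
    (hT : ↑T = tileVertsK n k i f) : (edgesInK n k T).ncard ≤ (k+1)^k := by
  classical
  have hc : ∀ e : ↥(edgesInK n k T), ∃ g : Fin k → Fin (k+1), ∀ p, e.1 p = f p (g p) :=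
    fun e => tile_edge_index hT e.2
  choose G hG using hc
  have key : (edgesInK n k T).ncard ≤ Nat.card (Fin k → Fin (k+1)) := by
    apply ncard_le_card_of_inj _ G
    intro e e' h
    apply Subtype.ext
    funext p
    rw [hG e p, hG e' p, h]
  simpa [Nat.card_eq_fintype_card] using key

lemma edgesIn_tile_ncard {i : ColK n} {T : Finset (VHK n k)} (h : IsTileColK n k i T) :
    (edgesInK n k T).ncard ≤ (k+1)^k := by
  obtain ⟨f, _, hT⟩ := h
  exact edgesIn_ncard hT

lemma exists_inr_mem (hk : 1 ≤ k) {i : ColK n} {f : Fin k → Fin (k+1) → Fin n}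
    {T : Finset (VHK n k)} (hT : ↑T = tileVertsK n k i f) :
    ∃ a, Sum.inr (i, a) ∈ T := by
  classical
  set u : Fin (k-1) → HVtx n k := fun t =>
    ((Fin.castLE (Nat.sub_le k 1) t : Fin k),
      f (Fin.castLE (Nat.sub_le k 1) t) (Fin.castLE (by omega : k-1 ≤ k+1) t)) with hu
  have hufst : ∀ t, (u t).1 = Fin.castLE (Nat.sub_le k 1) t := fun t => rfl
  have huinj : Function.Injective u := by
    intro t t' h
    have := congrArg Prod.fst h
    simpa [u, Fin.ext_iff] using this
  set a : Finset (HVtx n k) := Finset.image u Finset.univ with ha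
  have hmema : ∀ x ∈ a, ∃ t : Fin (k-1), u t = x := by
    intro x hx
    obtain ⟨t, _, ht⟩ := Finset.mem_image.mp hx
    exact ⟨t, ht⟩
  have hpt : PartialTrans n k a := by
    intro x hx y hy hxy
    obtain ⟨t, ht⟩ := hmema x hx
    obtain ⟨t', ht'⟩ := hmema y hy
    have : t = t' := by
      have : (u t).1 = (u t').1 := by rw [ht, ht', hxy]
      simpa [u, Fin.ext_iff] using this
    rw [← ht, ← ht', this]
  refine ⟨a, ?_⟩
  rw [← Finset.mem_coe, hT]
  refine Or.inr ⟨a, ⟨?_, hpt⟩, ?_, rfl⟩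
  · rw [ha, Finset.card_image_of_injective _ huinj]
    simp
  · refine ⟨fun x => ⟨min x.1.1 k, by omega⟩, ?_, ?_⟩
    · intro x hx
      obtain ⟨t, ht⟩ := hmema x hx
      subst ht
      show (u t).2 = f (u t).1 _
      have ht2 : (t : ℕ) < k - 1 := t.2
      have : (⟨min (u t).1.1 k, by omega⟩ : Fin (k+1)) = Fin.castLE (by omega : k-1 ≤ k+1) t := by
        apply Fin.ext
        show min (t : ℕ) k = (t : ℕ)
        omega
      show (u t).2 = f (u t).1 ⟨min (u t).1.1 k, by omega⟩
      rw [this]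
    · intro x hx y hy hxy
      obtain ⟨t, ht⟩ := hmema x (Finset.mem_coe.mp hx)
      obtain ⟨t', ht'⟩ := hmema y (Finset.mem_coe.mp hy)
      have hx1 : x.1.1 < k := x.1.2
      have hy1 : y.1.1 < k := y.1.2
      have hmin : min x.1.1 k = min y.1.1 k := by
        have := congrArg Fin.val hxy
        exact this
      have : x.1 = y.1 := Fin.ext (by omega)
      exact hpt x (Finset.mem_coe.mp hx) y (Finset.mem_coe.mp hy) this

lemma tileCol_unique (hk : 1 ≤ k) {i i' : ColK n} {T : Finset (VHK n k)}
    (h1 : IsTileColK n k i T) (h2 : IsTileColK n k i' T) : i = i' := by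
  obtain ⟨f, _, hT⟩ := h1
  obtain ⟨f', _, hT'⟩ := h2
  obtain ⟨a, haT⟩ := exists_inr_mem hk hT
  have hmem : (Sum.inr (i, a) : VHK n k) ∈ tileVertsK n k i' f' := by
    rw [← hT']; exact haT
  rcases hmem with ⟨b, _, _, heq⟩ | ⟨b, _, _, heq⟩
  · exact absurd heq (by simp)
  · have : (i, a) = (i', b) := by
      have := Sum.inr.injEq (β := ColK n × Finset (HVtx n k)) (i, a) (i', b) ▸ heq
      exact this
    exact congrArg Prod.fst this

lemma tiles_ne_of_col (hk : 1 ≤ k) {i j : ColK n} {T T' : Finset (VHK n k)}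
    (h1 : IsTileColK n k i T) (h2 : IsTileColK n k j T') (hij : i ≠ j) : T ≠ T' := by
  intro h
  exact hij (tileCol_unique hk (h ▸ h1) h2)

end DomainLemmas

section CountLemmas

variable {n k : ℕ}

/-- Tiles of color `i` containing a given base edge. -/
def TCsetK (n k : ℕ) (i : ColK n) (e' : Fin k → Fin n) : Set (Finset (VHK n k)) :=
  {U | IsTileColK n k i U ∧ Sum.inl (edgeOf n k e') ∈ U}

lemma TC_bound (i : ColK n) (e' : Fin k → Fin n) :
    (TCsetK n k i e').ncard ≤ ((k+1) * n^k)^k := by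
  classical
  have hc : ∀ U : ↥(TCsetK n k i e'), ∃ f : Fin k → Fin (k+1) → Fin n,
      (∀ p, Function.Injective (f p)) ∧ ↑U.1 = tileVertsK n k i f := fun U => U.2.1
  choose F hF1 hF2 using hc
  set S : Fin k → Set (Fin (k+1) → Fin n) := fun p => {gp | ∃ ℓ, gp ℓ = e' p} with hS
  have hmem : ∀ (U : ↥(TCsetK n k i e')) (p : Fin k), F U p ∈ S p := by
    intro U p
    obtain ⟨g, hg⟩ := tile_edge_index (hF2 U) U.2.2
    exact ⟨g p, (hg p).symm⟩
  have key : (TCsetK n k i e').ncard ≤ Nat.card (∀ p : Fin k, ↥(S p)) := by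
    apply ncard_le_card_of_inj _ (fun U => fun p => ⟨F U p, hmem U p⟩)
    intro U U' h
    have hFF : F U = F U' := funext fun p => congrArg Subtype.val (congrFun h p)
    apply Subtype.ext
    apply Finset.coe_injective
    rw [hF2 U, hF2 U', hFF]
  calc (TCsetK n k i e').ncard ≤ Nat.card (∀ p : Fin k, ↥(S p)) := key
    _ = ∏ p : Fin k, (S p).ncard := by
        rw [Nat.card_pi]
        exact Finset.prod_congr rfl fun p _ => Nat.card_coe_set_eq _
    _ ≤ ∏ _p : Fin k, ((k+1) * n^k) := by
        apply Finset.prod_le_prod'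
        intro p _
        exact countA k (e' p)
    _ = ((k+1) * n^k)^k := by simp

/-- Tiles of color `i` containing two given base edges. -/
def TC2setK (n k : ℕ) (i : ColK n) (e' e'' : Fin k → Fin n) : Set (Finset (VHK n k)) :=
  {U | IsTileColK n k i U ∧ Sum.inl (edgeOf n k e') ∈ U ∧ Sum.inl (edgeOf n k e'') ∈ U}

lemma TC2_bound (i : ColK n) {e' e'' : Fin k → Fin n} (hne : e' ≠ e'') :
    (TC2setK n k i e' e'').ncard ≤ ((k+1) * (k * n^(k-1))) * ((k+1) * n^k)^(k-1) := by
  classical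
  obtain ⟨p₀, hp₀⟩ : ∃ p₀, e' p₀ ≠ e'' p₀ := by
    by_contra h
    push_neg at h
    exact hne (funext h)
  have hc : ∀ U : ↥(TC2setK n k i e' e''), ∃ f : Fin k → Fin (k+1) → Fin n,
      (∀ p, Function.Injective (f p)) ∧ ↑U.1 = tileVertsK n k i f := fun U => U.2.1
  choose F hF1 hF2 using hc
  set S : Fin k → Set (Fin (k+1) → Fin n) := fun p =>
    {gp | Function.Injective gp ∧ (∃ ℓ, gp ℓ = e' p) ∧ (∃ ℓ, gp ℓ = e'' p)} with hS
  have hmem : ∀ (U : ↥(TC2setK n k i e' e'')) (p : Fin k), F U p ∈ S p := by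
    intro U p
    obtain ⟨g, hg⟩ := tile_edge_index (hF2 U) U.2.2.1
    obtain ⟨g', hg'⟩ := tile_edge_index (hF2 U) U.2.2.2
    exact ⟨hF1 U p, ⟨g p, (hg p).symm⟩, ⟨g' p, (hg' p).symm⟩⟩
  have key : (TC2setK n k i e' e'').ncard ≤ Nat.card (∀ p : Fin k, ↥(S p)) := by
    apply ncard_le_card_of_inj _ (fun U => fun p => ⟨F U p, hmem U p⟩)
    intro U U' h
    have hFF : F U = F U' := funext fun p => congrArg Subtype.val (congrFun h p)
    apply Subtype.ext
    apply Finset.coe_injective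
    rw [hF2 U, hF2 U', hFF]
  have hprod : Nat.card (∀ p : Fin k, ↥(S p)) = ∏ p : Fin k, (S p).ncard := by
    rw [Nat.card_pi]
    exact Finset.prod_congr rfl fun p _ => Nat.card_coe_set_eq _
  have hsplit : ∏ p : Fin k, (S p).ncard
      = (S p₀).ncard * ∏ p ∈ Finset.univ.erase p₀, (S p).ncard :=
    (Finset.mul_prod_erase Finset.univ _ (Finset.mem_univ p₀)).symm
  have h1 : (S p₀).ncard ≤ (k+1) * (k * n^(k-1)) := countA2 k (e' p₀) (e'' p₀) hp₀
  have h2 : ∏ p ∈ Finset.univ.erase p₀, (S p).ncard ≤ ((k+1) * n^k)^(k-1) := by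
    have := Finset.prod_le_pow_card (Finset.univ.erase p₀) (fun p => (S p).ncard)
      ((k+1) * n^k) ?_
    · rwa [Finset.card_erase_of_mem (Finset.mem_univ p₀), Finset.card_univ,
        Fintype.card_fin] at this
    · intro p _
      calc (S p).ncard ≤ ({gp : Fin (k+1) → Fin n | ∃ ℓ, gp ℓ = e' p}).ncard := by
            apply Set.ncard_le_ncard _ (Set.toFinite _)
            intro gp hgp
            exact hgp.2.1
        _ ≤ (k+1) * n^k := countA k (e' p)
  calc (TC2setK n k i e' e'').ncard ≤ Nat.card (∀ p : Fin k, ↥(S p)) := key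
    _ = ∏ p : Fin k, (S p).ncard := hprod
    _ = (S p₀).ncard * ∏ p ∈ Finset.univ.erase p₀, (S p).ncard := hsplit
    _ ≤ ((k+1) * (k * n^(k-1))) * ((k+1) * n^k)^(k-1) := Nat.mul_le_mul h1 h2

/-- Pointwise mixes of two edges from `E`. -/
def PMixSetK (n k : ℕ) (E : Set (Fin k → Fin n)) : Set (Fin k → Fin n) :=
  {e' | ∃ g ∈ E, ∃ h ∈ E, ∀ r, e' r = g r ∨ e' r = h r}

lemma PMix_bound (E : Set (Fin k → Fin n)) :
    (PMixSetK n k E).ncard ≤ E.ncard * E.ncard * 2^k := by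
  classical
  have hc : ∀ e : ↥(PMixSetK n k E), ∃ g ∈ E, ∃ h ∈ E, ∀ r, e.1 r = g r ∨ e.1 r = h r :=
    fun e => e.2
  choose gf hgE hf hhE hmix using hc
  have key : (PMixSetK n k E).ncard ≤ Nat.card (↥E × ↥E × (Fin k → Bool)) := by
    apply ncard_le_card_of_inj _
      (fun e : ↥(PMixSetK n k E) =>
        ((⟨gf e, hgE e⟩ : ↥E), (⟨hf e, hhE e⟩ : ↥E), fun r => decide (e.1 r = gf e r)))
    intro e e' h
    simp only [Prod.mk.injEq, Subtype.mk.injEq] at h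
    obtain ⟨h1, h2, h3⟩ := h
    apply Subtype.ext
    funext r
    have hb := congrFun h3 r
    by_cases hd : e.1 r = gf e r
    · have : decide (e'.1 r = gf e' r) = true := by rw [← hb]; simp [hd]
      have := of_decide_eq_true this
      rw [hd, h1, ← this]
    · have hd1 : e.1 r = hf e r := (hmix e r).resolve_left hd
      have : decide (e'.1 r = gf e' r) = false := by rw [← hb]; simp [hd]
      have hd' : ¬ (e'.1 r = gf e' r) := of_decide_eq_false this
      have hd1' : e'.1 r = hf e' r := (hmix e' r).resolve_left hd'
      rw [hd1, h2, ← hd1']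
  calc (PMixSetK n k E).ncard ≤ Nat.card (↥E × ↥E × (Fin k → Bool)) := key
    _ = E.ncard * (E.ncard * 2^k) := by
        rw [Nat.card_prod, Nat.card_prod, Nat.card_coe_set_eq,
          Nat.card_eq_fintype_card, Fintype.card_fun, Fintype.card_bool, Fintype.card_fin]
    _ = E.ncard * E.ncard * 2^k := by ring

/-- Mixes of two edges from `E` that are allowed to be arbitrary in one coordinate. -/
def NMixSetK (n k : ℕ) (E : Set (Fin k → Fin n)) : Set (Fin k → Fin n) :=
  {e' | ∃ g ∈ E, ∃ h ∈ E, ∃ s, ∀ r, r ≠ s → e' r = g r ∨ e' r = h r}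

set_option synthInstance.maxHeartbeats 1000000 in
lemma NMix_bound (E : Set (Fin k → Fin n)) :
    (NMixSetK n k E).ncard ≤ E.ncard * E.ncard * 2^k * (k * n) := by
  classical
  have hc : ∀ e : ↥(NMixSetK n k E), ∃ g ∈ E, ∃ h ∈ E, ∃ s, ∀ r, r ≠ s →
      e.1 r = g r ∨ e.1 r = h r := fun e => e.2
  choose gf hgE hf hhE sf hmix using hc
  have key : (NMixSetK n k E).ncard
      ≤ Nat.card (↥E × ↥E × (Fin k → Bool) × Fin k × Fin n) := by
    apply ncard_le_card_of_inj _
      (fun e : ↥(NMixSetK n k E) =>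
        ((⟨gf e, hgE e⟩ : ↥E), (⟨hf e, hhE e⟩ : ↥E), fun r => decide (e.1 r = gf e r),
        sf e, e.1 (sf e)))
    intro e e' h
    simp only [Prod.mk.injEq, Subtype.mk.injEq] at h
    obtain ⟨h1, h2, h3, h4, h5⟩ := h
    apply Subtype.ext
    funext r
    by_cases hr : r = sf e
    · rw [hr, h5, h4]
    · have hb := congrFun h3 r
      by_cases hd : e.1 r = gf e r
      · have : decide (e'.1 r = gf e' r) = true := by rw [← hb]; simp [hd]
        have := of_decide_eq_true this
        rw [hd, h1, ← this]
      · have hd1 : e.1 r = hf e r := (hmix e r hr).resolve_left hd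
        have : decide (e'.1 r = gf e' r) = false := by rw [← hb]; simp [hd]
        have hd' : ¬ (e'.1 r = gf e' r) := of_decide_eq_false this
        have hr' : r ≠ sf e' := by rw [← h4]; exact hr
        have hd1' : e'.1 r = hf e' r := (hmix e' r hr').resolve_left hd'
        rw [hd1, h2, ← hd1']
  calc (NMixSetK n k E).ncard ≤ Nat.card (↥E × ↥E × (Fin k → Bool) × Fin k × Fin n) := key
    _ = E.ncard * (E.ncard * (2^k * (k * n))) := by
        rw [Nat.card_prod, Nat.card_prod, Nat.card_prod, Nat.card_prod,
          Nat.card_coe_set_eq, Nat.card_eq_fintype_card (α := Fin k → Bool),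
          Nat.card_eq_fintype_card (α := Fin k), Nat.card_eq_fintype_card (α := Fin n),
          Fintype.card_fun, Fintype.card_bool]
        simp
    _ = E.ncard * E.ncard * 2^k * (k * n) := by ring

end CountLemmas

section KeyLemmas

variable {n k : ℕ}

/-- Unpacked facts about the four edges of the `K_{1,…,1,2,2}` copy. -/
lemma edge_mix_facts {p q : Fin k} (hpq : p ≠ q) (e : Fin k → Fin n) (a b : Fin n) :
    (∀ r, e r = (Function.update e p a) r ∨ e r = (Function.update e q b) r) ∧
    (∀ r, (Function.update (Function.update e p a) q b) r = (Function.update e p a) r ∨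
       (Function.update (Function.update e p a) q b) r = (Function.update e q b) r) ∧
    (∀ r, (Function.update e p a) r = e r ∨
       (Function.update e p a) r = (Function.update (Function.update e p a) q b) r) ∧
    (∀ r, (Function.update e q b) r = e r ∨
       (Function.update e q b) r = (Function.update (Function.update e p a) q b) r) := by
  have hqp : q ≠ p := Ne.symm hpq
  refine ⟨fun r => ?_, fun r => ?_, fun r => ?_, fun r => ?_⟩ <;>
    by_cases hrp : r = p <;> by_cases hrq : r = q <;>
    first
      | exact absurd (hrp.symm.trans hrq) hpq
      | simp [Function.update_apply, hrp, hrq, hpq, hqp] <;> tauto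

lemma edge_nmix_facts {p q : Fin k} (hpq : p ≠ q) (e : Fin k → Fin n) (a b : Fin n) :
    (∀ r, r ≠ q → (Function.update (Function.update e p a) q b) r = e r ∨
       (Function.update (Function.update e p a) q b) r = (Function.update e p a) r) ∧
    (∀ r, r ≠ p → (Function.update (Function.update e p a) q b) r = e r ∨
       (Function.update (Function.update e p a) q b) r = (Function.update e q b) r) ∧
    (∀ r, r ≠ p → (Function.update e p a) r = e r ∨
       (Function.update e p a) r = (Function.update e q b) r) ∧
    (∀ r, r ≠ q → (Function.update e p a) r =
         (Function.update (Function.update e p a) q b) r ∨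
       (Function.update e p a) r = (Function.update e q b) r) ∧
    (∀ r, r ≠ p → (Function.update e q b) r =
         (Function.update (Function.update e p a) q b) r ∨
       (Function.update e q b) r = (Function.update e p a) r) ∧
    (∀ r, r ≠ q → (Function.update e q b) r = e r ∨
       (Function.update e q b) r = (Function.update e p a) r) := by
  have hqp : q ≠ p := Ne.symm hpq
  refine ⟨fun r hr => ?_, fun r hr => ?_, fun r hr => ?_, fun r hr => ?_,
    fun r hr => ?_, fun r hr => ?_⟩ <;>
    by_cases hrp : r = p <;> by_cases hrq : r = q <;>
    first
      | exact absurd (hrp.symm.trans hrq) hpq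
      | exact absurd hrp hr
      | exact absurd hrq hr
      | (simp [Function.update_apply, hrp, hrq, hpq, hqp] <;> tauto)

lemma edge_ne_facts {p q : Fin k} (hpq : p ≠ q) {e : Fin k → Fin n} {a b : Fin n}
    (hea : e p ≠ a) (heb : e q ≠ b) :
    e ≠ Function.update e p a ∧ e ≠ Function.update e q b ∧
    e ≠ Function.update (Function.update e p a) q b ∧
    Function.update e p a ≠ Function.update e q b ∧
    Function.update (Function.update e p a) q b ≠ Function.update e p a ∧
    Function.update (Function.update e p a) q b ≠ Function.update e q b := by
  have hqp : q ≠ p := Ne.symm hpq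
  refine ⟨fun h => ?_, fun h => ?_, fun h => ?_, fun h => ?_, fun h => ?_, fun h => ?_⟩
  · have := congrFun h p
    simp [Function.update_apply] at this
    exact hea this
  · have := congrFun h q
    simp [Function.update_apply] at this
    exact heb this
  · have := congrFun h p
    simp [Function.update_apply, hpq, hqp] at this
    exact hea this
  · have := congrFun h p
    simp [Function.update_apply, hpq, hqp] at this
    exact hea this.symm
  · have := congrFun h q
    simp [Function.update_apply, hpq, hqp] at this
    exact heb this.symm
  · have := congrFun h p
    simp [Function.update_apply, hpq, hqp] at this
    exact hea this.symm

end KeyLemmas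

section Key32

variable {n k : ℕ}

set_option maxHeartbeats 2000000 in
lemma key32 (hk : 2 ≤ k) {C : Finset (Finset (VHK n k))} {T T' : Finset (VHK n k)}
    {iT iT' : ColK n}
    (hC : IsConflictK n k C) (hT : T ∈ C) (hT' : T' ∈ C)
    (hTT' : T ≠ T') (hcard : C.card = 3)
    (hiT : IsTileColK n k iT T) (hiT' : IsTileColK n k iT' T') :
    ∃ U, C = {T, T', U} ∧ U ≠ T ∧ U ≠ T' ∧
      ((∃ e', e' ∈ PMixSetK n k (edgesInK n k T ∪ edgesInK n k T') ∧
          e' ∈ edgesInK n k U ∧ (IsTileColK n k iT U ∨ IsTileColK n k iT' U)) ∨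
       (∃ e' e'', e' ≠ e'' ∧ e' ∈ PMixSetK n k (edgesInK n k T ∪ edgesInK n k T') ∧
          e'' ∈ PMixSetK n k (edgesInK n k T ∪ edgesInK n k T') ∧
          e' ∈ edgesInK n k U ∧ e'' ∈ edgesInK n k U ∧ IsTileK n k U)) := by
  classical
  have hk1 : 1 ≤ k := by omega
  obtain ⟨-, hdisj, i, j, hij, T₁, T₂, T₃, T₄, h1, h2, h3, h4, hCeq, p, q, hpq, e, a, b,
    hea, heb, m1, m2, m3, m4⟩ := hC
  obtain ⟨mx1, mx2, mx3, mx4⟩ := edge_mix_facts hpq e a b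
  obtain ⟨ne1, ne2, ne3, ne4, ne5, ne6⟩ := edge_ne_facts hpq hea heb
  have hT13 : T₁ ≠ T₃ := tiles_ne_of_col hk1 h1 h3 hij
  have hT14 : T₁ ≠ T₄ := tiles_ne_of_col hk1 h1 h4 hij
  have hT23 : T₂ ≠ T₃ := tiles_ne_of_col hk1 h2 h3 hij
  have hT24 : T₂ ≠ T₄ := tiles_ne_of_col hk1 h2 h4 hij
  have hCset : ∀ x, x ∈ C ↔ (x = T₁ ∨ x = T₂ ∨ x = T₃ ∨ x = T₄) := by
    intro x; rw [hCeq]; simp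
  have hTm := (hCset T).mp hT
  have hT'm := (hCset T').mp hT'
  by_cases h12 : T₁ = T₂ <;> by_cases h34 : T₃ = T₄
  · exfalso
    have hC2 : C = {T₁, T₃} := by
      ext x; rw [hCset x]
      simp only [Finset.mem_insert, Finset.mem_singleton]
      constructor
      · rintro (rfl | rfl | rfl | rfl) <;> tauto
      · rintro (rfl | rfl) <;> tauto
    rw [hC2] at hcard
    have h5 := Finset.card_insert_le T₁ ({T₃} : Finset (Finset (VHK n k)))
    simp at h5
    omega
  · -- T₁ = T₂, T₃ ≠ T₄ : C = {T₁, T₃, T₄}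
    subst h12
    have hTm3 : T = T₁ ∨ T = T₃ ∨ T = T₄ := by rcases hTm with h | h | h | h <;> tauto
    have hT'm3 : T' = T₁ ∨ T' = T₃ ∨ T' = T₄ := by
      rcases hT'm with h | h | h | h <;> tauto
    clear hTm hT'm
    rcases hTm3 with rfl | rfl | rfl <;> rcases hT'm3 with rfl | rfl | rfl <;>
      try exact absurd rfl hTT'
    -- (T₁,T₃)
    · refine ⟨T₄, ?_, Ne.symm hT14, Ne.symm h34, Or.inl ⟨Function.update e q b,
        ⟨e, Or.inl m1, Function.update (Function.update e p a) q b,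
          Or.inl m2, mx4⟩, m4, ?_⟩⟩
      · ext x; rw [hCset x]
        simp only [Finset.mem_insert, Finset.mem_singleton]
        constructor
        · rintro (rfl | rfl | rfl | rfl) <;> tauto
        · rintro (rfl | rfl | rfl) <;> tauto
      · right
        have : iT' = j := tileCol_unique hk1 hiT' h3
        rw [this]; exact h4
    -- (T₁,T₄)
    · refine ⟨T₃, ?_, Ne.symm hT13, h34, Or.inl ⟨Function.update e p a,
        ⟨e, Or.inl m1, Function.update (Function.update e p a) q b,
          Or.inl m2, mx3⟩, m3, ?_⟩⟩
      · ext x; rw [hCset x]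
        simp only [Finset.mem_insert, Finset.mem_singleton]
        constructor
        · rintro (rfl | rfl | rfl | rfl) <;> tauto
        · rintro (rfl | rfl | rfl) <;> tauto
      · right
        have : iT' = j := tileCol_unique hk1 hiT' h4
        rw [this]; exact h3
    -- (T₃,T₁)
    · refine ⟨T₄, ?_, Ne.symm h34, Ne.symm hT14, Or.inl ⟨Function.update e q b,
        ⟨e, Or.inr m1, Function.update (Function.update e p a) q b,
          Or.inr m2, mx4⟩, m4, ?_⟩⟩
      · ext x; rw [hCset x]
        simp only [Finset.mem_insert, Finset.mem_singleton]
        constructor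
        · rintro (rfl | rfl | rfl | rfl) <;> tauto
        · rintro (rfl | rfl | rfl) <;> tauto
      · left
        have : iT = j := tileCol_unique hk1 hiT h3
        rw [this]; exact h4
    -- (T₃,T₄)
    · refine ⟨T₁, ?_, hT13, hT14, Or.inr ⟨e,
        Function.update (Function.update e p a) q b, ne3,
        ⟨Function.update e p a, Or.inl m3, Function.update e q b, Or.inr m4, mx1⟩,
        ⟨Function.update e p a, Or.inl m3, Function.update e q b, Or.inr m4, mx2⟩,
        m1, m2, ⟨i, h1⟩⟩⟩
      ext x; rw [hCset x]
      simp only [Finset.mem_insert, Finset.mem_singleton]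
      constructor
      · rintro (rfl | rfl | rfl | rfl) <;> tauto
      · rintro (rfl | rfl | rfl) <;> tauto
    -- (T₄,T₁)
    · refine ⟨T₃, ?_, h34, Ne.symm hT13, Or.inl ⟨Function.update e p a,
        ⟨e, Or.inr m1, Function.update (Function.update e p a) q b,
          Or.inr m2, mx3⟩, m3, ?_⟩⟩
      · ext x; rw [hCset x]
        simp only [Finset.mem_insert, Finset.mem_singleton]
        constructor
        · rintro (rfl | rfl | rfl | rfl) <;> tauto
        · rintro (rfl | rfl | rfl) <;> tauto
      · left
        have : iT = j := tileCol_unique hk1 hiT h4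
        rw [this]; exact h3
    -- (T₄,T₃)
    · refine ⟨T₁, ?_, hT14, hT13, Or.inr ⟨e,
        Function.update (Function.update e p a) q b, ne3,
        ⟨Function.update e p a, Or.inr m3, Function.update e q b, Or.inl m4, mx1⟩,
        ⟨Function.update e p a, Or.inr m3, Function.update e q b, Or.inl m4, mx2⟩,
        m1, m2, ⟨i, h1⟩⟩⟩
      ext x; rw [hCset x]
      simp only [Finset.mem_insert, Finset.mem_singleton]
      constructor
      · rintro (rfl | rfl | rfl | rfl) <;> tauto
      · rintro (rfl | rfl | rfl) <;> tauto
  · -- T₁ ≠ T₂, T₃ = T₄ : C = {T₁, T₂, T₃}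
    subst h34
    have hTm3 : T = T₁ ∨ T = T₂ ∨ T = T₃ := by rcases hTm with h | h | h | h <;> tauto
    have hT'm3 : T' = T₁ ∨ T' = T₂ ∨ T' = T₃ := by
      rcases hT'm with h | h | h | h <;> tauto
    clear hTm hT'm
    rcases hTm3 with rfl | rfl | rfl <;> rcases hT'm3 with rfl | rfl | rfl <;>
      try exact absurd rfl hTT'
    -- (T₁,T₂)
    · refine ⟨T₃, ?_, Ne.symm hT13, Ne.symm hT23, Or.inr ⟨Function.update e p a,
        Function.update e q b, ne4,
        ⟨e, Or.inl m1, Function.update (Function.update e p a) q b, Or.inr m2, mx3⟩,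
        ⟨e, Or.inl m1, Function.update (Function.update e p a) q b, Or.inr m2, mx4⟩,
        m3, m4, ⟨j, h3⟩⟩⟩
      ext x; rw [hCset x]
      simp only [Finset.mem_insert, Finset.mem_singleton]
      constructor
      · rintro (rfl | rfl | rfl | rfl) <;> tauto
      · rintro (rfl | rfl | rfl) <;> tauto
    -- (T₁,T₃)
    · refine ⟨T₂, ?_, Ne.symm h12, hT23, Or.inl
        ⟨Function.update (Function.update e p a) q b,
        ⟨Function.update e p a, Or.inr m3, Function.update e q b,
          Or.inr m4, mx2⟩, m2, ?_⟩⟩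
      · ext x; rw [hCset x]
        simp only [Finset.mem_insert, Finset.mem_singleton]
        constructor
        · rintro (rfl | rfl | rfl | rfl) <;> tauto
        · rintro (rfl | rfl | rfl) <;> tauto
      · left
        have : iT = i := tileCol_unique hk1 hiT h1
        rw [this]; exact h2
    -- (T₂,T₁)
    · refine ⟨T₃, ?_, Ne.symm hT23, Ne.symm hT13, Or.inr ⟨Function.update e p a,
        Function.update e q b, ne4,
        ⟨e, Or.inr m1, Function.update (Function.update e p a) q b, Or.inl m2, mx3⟩,
        ⟨e, Or.inr m1, Function.update (Function.update e p a) q b, Or.inl m2, mx4⟩,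
        m3, m4, ⟨j, h3⟩⟩⟩
      ext x; rw [hCset x]
      simp only [Finset.mem_insert, Finset.mem_singleton]
      constructor
      · rintro (rfl | rfl | rfl | rfl) <;> tauto
      · rintro (rfl | rfl | rfl) <;> tauto
    -- (T₂,T₃)
    · refine ⟨T₁, ?_, h12, hT13, Or.inl ⟨e,
        ⟨Function.update e p a, Or.inr m3, Function.update e q b,
          Or.inr m4, mx1⟩, m1, ?_⟩⟩
      · ext x; rw [hCset x]
        simp only [Finset.mem_insert, Finset.mem_singleton]
        constructor
        · rintro (rfl | rfl | rfl | rfl) <;> tauto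
        · rintro (rfl | rfl | rfl) <;> tauto
      · left
        have : iT = i := tileCol_unique hk1 hiT h2
        rw [this]; exact h1
    -- (T₃,T₁)
    · refine ⟨T₂, ?_, hT23, Ne.symm h12, Or.inl
        ⟨Function.update (Function.update e p a) q b,
        ⟨Function.update e p a, Or.inl m3, Function.update e q b,
          Or.inl m4, mx2⟩, m2, ?_⟩⟩
      · ext x; rw [hCset x]
        simp only [Finset.mem_insert, Finset.mem_singleton]
        constructor
        · rintro (rfl | rfl | rfl | rfl) <;> tauto
        · rintro (rfl | rfl | rfl) <;> tauto
      · right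
        have : iT' = i := tileCol_unique hk1 hiT' h1
        rw [this]; exact h2
    -- (T₃,T₂)
    · refine ⟨T₁, ?_, hT13, h12, Or.inl ⟨e,
        ⟨Function.update e p a, Or.inl m3, Function.update e q b,
          Or.inl m4, mx1⟩, m1, ?_⟩⟩
      · ext x; rw [hCset x]
        simp only [Finset.mem_insert, Finset.mem_singleton]
        constructor
        · rintro (rfl | rfl | rfl | rfl) <;> tauto
        · rintro (rfl | rfl | rfl) <;> tauto
      · right
        have : iT' = i := tileCol_unique hk1 hiT' h2
        rw [this]; exact h1
  · -- T₁ ≠ T₂ and T₃ ≠ T₄ : four distinct tiles, contradiction with card = 3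
    exfalso
    have hc4 : C.card = 4 := by
      rw [hCeq]
      rw [Finset.card_insert_of_notMem (by simp [h12, hT13, hT14]),
        Finset.card_insert_of_notMem (by simp [hT23, hT24]),
        Finset.card_insert_of_notMem (by simp [h34])]
      simp
    omega

end Key32

section Key43

variable {n k : ℕ}

set_option maxHeartbeats 2000000 in
lemma key43 (hk : 2 ≤ k) {C : Finset (Finset (VHK n k))} {T T' T'' : Finset (VHK n k)}
    {iT iT' iT'' : ColK n}
    (hC : IsConflictK n k C) (hT : T ∈ C) (hT' : T' ∈ C) (hT'' : T'' ∈ C)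
    (hd1 : T ≠ T') (hd2 : T ≠ T'') (hd3 : T' ≠ T'') (hcard : C.card = 4)
    (hiT : IsTileColK n k iT T) (hiT' : IsTileColK n k iT' T')
    (hiT'' : IsTileColK n k iT'' T'') :
    ∃ U, C = {T, T', T'', U} ∧
      ∃ e', e' ∈ PMixSetK n k (edgesInK n k T ∪ edgesInK n k T' ∪ edgesInK n k T'') ∧
        e' ∈ edgesInK n k U ∧
        (IsTileColK n k iT U ∨ IsTileColK n k iT' U ∨ IsTileColK n k iT'' U) := by
  classical
  have hk1 : 1 ≤ k := by omega
  obtain ⟨-, hdisj, i, j, hij, T₁, T₂, T₃, T₄, h1, h2, h3, h4, hCeq, p, q, hpq, e, a, b,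
    hea, heb, m1, m2, m3, m4⟩ := hC
  obtain ⟨mx1, mx2, mx3, mx4⟩ := edge_mix_facts hpq e a b
  have hT13 : T₁ ≠ T₃ := tiles_ne_of_col hk1 h1 h3 hij
  have hT14 : T₁ ≠ T₄ := tiles_ne_of_col hk1 h1 h4 hij
  have hT23 : T₂ ≠ T₃ := tiles_ne_of_col hk1 h2 h3 hij
  have hT24 : T₂ ≠ T₄ := tiles_ne_of_col hk1 h2 h4 hij
  have hCset : ∀ x, x ∈ C ↔ (x = T₁ ∨ x = T₂ ∨ x = T₃ ∨ x = T₄) := by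
    intro x; rw [hCeq]; simp
  have hle3 : ∀ x y z : Finset (VHK n k), ({x, y, z} : Finset (Finset (VHK n k))).card ≤ 3 := by
    intro x y z
    calc ({x, y, z} : Finset (Finset (VHK n k))).card
        ≤ ({y, z} : Finset (Finset (VHK n k))).card + 1 := Finset.card_insert_le _ _
      _ ≤ (({z} : Finset (Finset (VHK n k))).card + 1) + 1 := by
          have := Finset.card_insert_le y ({z} : Finset (Finset (VHK n k)))
          omega
      _ ≤ 3 := by simp
  have h12 : T₁ ≠ T₂ := by
    intro h
    have hsub : C ⊆ {T₂, T₃, T₄} := by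
      intro x hx
      rcases (hCset x).mp hx with rfl | rfl | rfl | rfl <;> simp [h]
    have := Finset.card_le_card hsub
    have := hle3 T₂ T₃ T₄
    omega
  have h34 : T₃ ≠ T₄ := by
    intro h
    have hsub : C ⊆ {T₁, T₂, T₃} := by
      intro x hx
      rcases (hCset x).mp hx with rfl | rfl | rfl | rfl <;> simp [h]
    have := Finset.card_le_card hsub
    have := hle3 T₁ T₂ T₃
    omega
  -- the fourth tile
  set F : Finset (Finset (VHK n k)) := {T, T', T''} with hF
  have hFsub : F ⊆ C := by
    intro x hx
    simp only [hF, Finset.mem_insert, Finset.mem_singleton] at hx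
    rcases hx with rfl | rfl | rfl <;> assumption
  have hFcard : F.card = 3 := by
    rw [hF, Finset.card_insert_of_notMem (by simp [hd1, hd2]),
      Finset.card_insert_of_notMem (by simp [hd3])]
    simp
  have hsd : (C \ F).card = 1 := by
    rw [Finset.card_sdiff_of_subset hFsub, hcard, hFcard]
  obtain ⟨U, hU⟩ := Finset.card_eq_one.mp hsd
  have hUC : U ∈ C := (Finset.mem_sdiff.mp (hU ▸ Finset.mem_singleton_self U)).1
  have hUF : U ∉ F := (Finset.mem_sdiff.mp (hU ▸ Finset.mem_singleton_self U)).2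
  have hmemF : ∀ W, W ∈ C → W ≠ U → (W = T ∨ W = T' ∨ W = T'') := by
    intro W hW hWU
    by_contra hcon
    push_neg at hcon
    have hWF : W ∉ F := by
      simp only [hF, Finset.mem_insert, Finset.mem_singleton]
      tauto
    have : W ∈ C \ F := Finset.mem_sdiff.mpr ⟨hW, hWF⟩
    rw [hU] at this
    exact hWU (Finset.mem_singleton.mp this)
  have hCeq' : C = {T, T', T'', U} := by
    ext x
    simp only [Finset.mem_insert, Finset.mem_singleton]
    constructor
    · intro hx
      by_cases hxU : x = U
      · tauto
      · rcases hmemF x hx hxU with rfl | rfl | rfl <;> tauto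
    · rintro (rfl | rfl | rfl | rfl) <;> [exact hT; exact hT'; exact hT''; exact hUC]
  have hE3 : ∀ W, W ∈ C → W ≠ U →
      edgesInK n k W ⊆ edgesInK n k T ∪ edgesInK n k T' ∪ edgesInK n k T'' := by
    intro W hW hWU x hx
    rcases hmemF W hW hWU with rfl | rfl | rfl
    · exact Or.inl (Or.inl hx)
    · exact Or.inl (Or.inr hx)
    · exact Or.inr hx
  have hcolconc : ∀ (c : ColK n) (W : Finset (VHK n k)), W ∈ C → W ≠ U →
      IsTileColK n k c W → IsTileColK n k c U →
      (IsTileColK n k iT U ∨ IsTileColK n k iT' U ∨ IsTileColK n k iT'' U) := by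
    intro c W hW hWU hcW hcU
    rcases hmemF W hW hWU with rfl | rfl | rfl
    · left; rwa [tileCol_unique hk1 hiT hcW]
    · right; left; rwa [tileCol_unique hk1 hiT' hcW]
    · right; right; rwa [tileCol_unique hk1 hiT'' hcW]
  have hT1C : T₁ ∈ C := (hCset T₁).mpr (by tauto)
  have hT2C : T₂ ∈ C := (hCset T₂).mpr (by tauto)
  have hT3C : T₃ ∈ C := (hCset T₃).mpr (by tauto)
  have hT4C : T₄ ∈ C := (hCset T₄).mpr (by tauto)
  refine ⟨U, hCeq', ?_⟩
  rcases (hCset U).mp hUC with rfl | rfl | rfl | rfl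
  · -- U = T₁ : edge e = mix(e₃, e₄), same color as T₂
    exact ⟨e, ⟨Function.update e p a, hE3 T₃ hT3C (Ne.symm hT13) m3,
      Function.update e q b, hE3 T₄ hT4C (Ne.symm hT14) m4, mx1⟩, m1,
      hcolconc i T₂ hT2C (Ne.symm h12) h2 h1⟩
  · exact ⟨Function.update (Function.update e p a) q b,
      ⟨Function.update e p a, hE3 T₃ hT3C (Ne.symm hT23) m3,
      Function.update e q b, hE3 T₄ hT4C (Ne.symm hT24) m4, mx2⟩, m2,
      hcolconc i T₁ hT1C h12 h1 h2⟩
  · exact ⟨Function.update e p a, ⟨e, hE3 T₁ hT1C hT13 m1,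
      Function.update (Function.update e p a) q b, hE3 T₂ hT2C hT23 m2, mx3⟩, m3,
      hcolconc j T₄ hT4C (Ne.symm h34) h4 h3⟩
  · exact ⟨Function.update e q b, ⟨e, hE3 T₁ hT1C hT14 m1,
      Function.update (Function.update e p a) q b, hE3 T₂ hT2C hT24 m2, mx4⟩, m4,
      hcolconc j T₃ hT3C h34 h3 h4⟩

end Key43

section Key42

variable {n k : ℕ}

set_option maxHeartbeats 4000000 in
lemma key42 (hk : 2 ≤ k) {C : Finset (Finset (VHK n k))} {T T' : Finset (VHK n k)}
    {iT iT' : ColK n}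
    (hC : IsConflictK n k C) (hT : T ∈ C) (hT' : T' ∈ C) (hTT' : T ≠ T')
    (hcard : C.card = 4)
    (hiT : IsTileColK n k iT T) (hiT' : IsTileColK n k iT' T') :
    ∃ U V, C = {T, T', U, V} ∧
      (((∃ e', e' ∈ NMixSetK n k (edgesInK n k T ∪ edgesInK n k T') ∧
            e' ∈ edgesInK n k U ∧ (IsTileColK n k iT U ∨ IsTileColK n k iT' U)) ∧
        (∃ e'', e'' ∈ PMixSetK n k
              ((edgesInK n k T ∪ edgesInK n k T') ∪ edgesInK n k U) ∧
            e'' ∈ edgesInK n k V ∧ (IsTileColK n k iT V ∨ IsTileColK n k iT' V))) ∨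
       ((∃ e', e' ∈ PMixSetK n k (edgesInK n k T ∪ edgesInK n k T') ∧
            e' ∈ edgesInK n k U) ∧
        (∃ e'', e'' ∈ PMixSetK n k (edgesInK n k T ∪ edgesInK n k T') ∧
            e'' ∈ edgesInK n k V) ∧
        (∃ c, IsTileColK n k c U ∧ IsTileColK n k c V))) := by
  classical
  have hk1 : 1 ≤ k := by omega
  obtain ⟨-, hdisj, i, j, hij, T₁, T₂, T₃, T₄, h1, h2, h3, h4, hCeq, p, q, hpq, e, a, b,
    hea, heb, m1, m2, m3, m4⟩ := hC
  obtain ⟨mx1, mx2, mx3, mx4⟩ := edge_mix_facts hpq e a b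
  obtain ⟨nf1, nf2, nf3, nf4, nf5, nf6⟩ := edge_nmix_facts hpq e a b
  have hT13 : T₁ ≠ T₃ := tiles_ne_of_col hk1 h1 h3 hij
  have hT14 : T₁ ≠ T₄ := tiles_ne_of_col hk1 h1 h4 hij
  have hT23 : T₂ ≠ T₃ := tiles_ne_of_col hk1 h2 h3 hij
  have hT24 : T₂ ≠ T₄ := tiles_ne_of_col hk1 h2 h4 hij
  have hCset : ∀ x, x ∈ C ↔ (x = T₁ ∨ x = T₂ ∨ x = T₃ ∨ x = T₄) := by
    intro x; rw [hCeq]; simp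
  have hle3 : ∀ x y z : Finset (VHK n k),
      ({x, y, z} : Finset (Finset (VHK n k))).card ≤ 3 := by
    intro x y z
    calc ({x, y, z} : Finset (Finset (VHK n k))).card
        ≤ ({y, z} : Finset (Finset (VHK n k))).card + 1 := Finset.card_insert_le _ _
      _ ≤ (({z} : Finset (Finset (VHK n k))).card + 1) + 1 := by
          have := Finset.card_insert_le y ({z} : Finset (Finset (VHK n k)))
          omega
      _ ≤ 3 := by simp
  have h12 : T₁ ≠ T₂ := by
    intro h
    have hsub : C ⊆ {T₂, T₃, T₄} := by
      intro x hx
      rcases (hCset x).mp hx with rfl | rfl | rfl | rfl <;> simp [h]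
    have := Finset.card_le_card hsub
    have := hle3 T₂ T₃ T₄
    omega
  have h34 : T₃ ≠ T₄ := by
    intro h
    have hsub : C ⊆ {T₁, T₂, T₃} := by
      intro x hx
      rcases (hCset x).mp hx with rfl | rfl | rfl | rfl <;> simp [h]
    have := Finset.card_le_card hsub
    have := hle3 T₁ T₂ T₃
    omega
  set F : Finset (Finset (VHK n k)) := {T, T'} with hF
  have hFsub : F ⊆ C := by
    intro x hx
    simp only [hF, Finset.mem_insert, Finset.mem_singleton] at hx
    rcases hx with rfl | rfl <;> assumption
  have hFcard : F.card = 2 := by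
    rw [hF, Finset.card_insert_of_notMem (by simp [hTT'])]
    simp
  have hsd : (C \ F).card = 2 := by
    rw [Finset.card_sdiff_of_subset hFsub, hcard, hFcard]
  obtain ⟨U₀, V₀, hUV, hUVeq⟩ := Finset.card_eq_two.mp hsd
  have hU0 : U₀ ∈ C \ F := hUVeq ▸ Finset.mem_insert_self U₀ {V₀}
  have hV0 : V₀ ∈ C \ F := hUVeq ▸ Finset.mem_insert_of_mem (Finset.mem_singleton_self V₀)
  have hU0C : U₀ ∈ C := (Finset.mem_sdiff.mp hU0).1
  have hV0C : V₀ ∈ C := (Finset.mem_sdiff.mp hV0).1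
  have hmemF : ∀ W, W ∈ C → W ≠ U₀ → W ≠ V₀ → (W = T ∨ W = T') := by
    intro W hW hWU hWV
    by_contra hcon
    push_neg at hcon
    have hWF : W ∉ F := by
      simp only [hF, Finset.mem_insert, Finset.mem_singleton]
      tauto
    have h5 : W ∈ C \ F := Finset.mem_sdiff.mpr ⟨hW, hWF⟩
    rw [hUVeq] at h5
    simp only [Finset.mem_insert, Finset.mem_singleton] at h5
    tauto
  have hCeq1 : C = {T, T', U₀, V₀} := by
    ext x
    simp only [Finset.mem_insert, Finset.mem_singleton]
    constructor
    · intro hx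
      by_cases hxU : x = U₀
      · tauto
      by_cases hxV : x = V₀
      · tauto
      rcases hmemF x hx hxU hxV with rfl | rfl <;> tauto
    · rintro (rfl | rfl | rfl | rfl) <;> [exact hT; exact hT'; exact hU0C; exact hV0C]
  have hCeq2 : C = {T, T', V₀, U₀} := by
    rw [hCeq1]
    ext x
    simp only [Finset.mem_insert, Finset.mem_singleton]
    tauto
  have hE : ∀ W, W ∈ C → W ≠ U₀ → W ≠ V₀ →
      edgesInK n k W ⊆ edgesInK n k T ∪ edgesInK n k T' := by
    intro W hW hWU hWV x hx
    rcases hmemF W hW hWU hWV with rfl | rfl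
    · exact Or.inl hx
    · exact Or.inr hx
  have hcol2 : ∀ (c : ColK n) (W : Finset (VHK n k)), W ∈ C → W ≠ U₀ → W ≠ V₀ →
      IsTileColK n k c W → ∀ X : Finset (VHK n k), IsTileColK n k c X →
      (IsTileColK n k iT X ∨ IsTileColK n k iT' X) := by
    intro c W hW hWU hWV hcW X hcX
    rcases hmemF W hW hWU hWV with rfl | rfl
    · left; rwa [tileCol_unique hk1 hiT hcW]
    · right; rwa [tileCol_unique hk1 hiT' hcW]
  have hT1C : T₁ ∈ C := (hCset T₁).mpr (by tauto)
  have hT2C : T₂ ∈ C := (hCset T₂).mpr (by tauto)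
  have hT3C : T₃ ∈ C := (hCset T₃).mpr (by tauto)
  have hT4C : T₄ ∈ C := (hCset T₄).mpr (by tauto)
  rcases (hCset U₀).mp hU0C with rfl | rfl | rfl | rfl <;>
    rcases (hCset V₀).mp hV0C with rfl | rfl | rfl | rfl <;>
    try exact absurd rfl hUV
  -- case (T₁,T₂)
  · exact ⟨U₀, V₀, hCeq1, Or.inr ⟨⟨e,
      ⟨Function.update e p a, hE T₃ hT3C (by first | assumption | (apply Ne.symm; assumption)) (by first | assumption | (apply Ne.symm; assumption)) m3,
        Function.update e q b, hE T₄ hT4C (by first | assumption | (apply Ne.symm; assumption)) (by first | assumption | (apply Ne.symm; assumption)) m4, mx1⟩, m1⟩,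
      ⟨Function.update (Function.update e p a) q b,
      ⟨Function.update e p a, hE T₃ hT3C (by first | assumption | (apply Ne.symm; assumption)) (by first | assumption | (apply Ne.symm; assumption)) m3,
        Function.update e q b, hE T₄ hT4C (by first | assumption | (apply Ne.symm; assumption)) (by first | assumption | (apply Ne.symm; assumption)) m4, mx2⟩, m2⟩,
      ⟨i, h1, h2⟩⟩⟩  -- case (T₁,T₃)
  · refine ⟨V₀, U₀, hCeq2, Or.inl ⟨⟨Function.update e p a,
      ⟨Function.update (Function.update e p a) q b,
        hE T₂ hT2C (by first | assumption | (apply Ne.symm; assumption)) (by first | assumption | (apply Ne.symm; assumption)) m2,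
        Function.update e q b, hE T₄ hT4C (by first | assumption | (apply Ne.symm; assumption)) (by first | assumption | (apply Ne.symm; assumption)) m4, q, nf4⟩, m3,
      hcol2 j T₄ hT4C (by first | assumption | (apply Ne.symm; assumption)) (by first | assumption | (apply Ne.symm; assumption)) h4 V₀ h3⟩,
      ⟨e, ⟨Function.update e p a, Or.inr m3,
        Function.update e q b, Or.inl (hE T₄ hT4C (by first | assumption | (apply Ne.symm; assumption)) (by first | assumption | (apply Ne.symm; assumption)) m4), mx1⟩, m1,
      hcol2 i T₂ hT2C (by first | assumption | (apply Ne.symm; assumption)) (by first | assumption | (apply Ne.symm; assumption)) h2 U₀ h1⟩⟩⟩  -- case (T₁,T₄)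
  · refine ⟨V₀, U₀, hCeq2, Or.inl ⟨⟨Function.update e q b,
      ⟨Function.update (Function.update e p a) q b,
        hE T₂ hT2C (by first | assumption | (apply Ne.symm; assumption)) (by first | assumption | (apply Ne.symm; assumption)) m2,
        Function.update e p a, hE T₃ hT3C (by first | assumption | (apply Ne.symm; assumption)) (by first | assumption | (apply Ne.symm; assumption)) m3, p, nf5⟩, m4,
      hcol2 j T₃ hT3C (by first | assumption | (apply Ne.symm; assumption)) (by first | assumption | (apply Ne.symm; assumption)) h3 V₀ h4⟩,
      ⟨e, ⟨Function.update e p a, Or.inl (hE T₃ hT3C (by first | assumption | (apply Ne.symm; assumption)) (by first | assumption | (apply Ne.symm; assumption)) m3),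
        Function.update e q b, Or.inr m4, mx1⟩, m1,
      hcol2 i T₂ hT2C (by first | assumption | (apply Ne.symm; assumption)) (by first | assumption | (apply Ne.symm; assumption)) h2 U₀ h1⟩⟩⟩  -- case (T₂,T₁)
  · exact ⟨U₀, V₀, hCeq1, Or.inr ⟨⟨Function.update (Function.update e p a) q b,
      ⟨Function.update e p a, hE T₃ hT3C (by first | assumption | (apply Ne.symm; assumption)) (by first | assumption | (apply Ne.symm; assumption)) m3,
        Function.update e q b, hE T₄ hT4C (by first | assumption | (apply Ne.symm; assumption)) (by first | assumption | (apply Ne.symm; assumption)) m4, mx2⟩, m2⟩,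
      ⟨e, ⟨Function.update e p a, hE T₃ hT3C (by first | assumption | (apply Ne.symm; assumption)) (by first | assumption | (apply Ne.symm; assumption)) m3,
        Function.update e q b, hE T₄ hT4C (by first | assumption | (apply Ne.symm; assumption)) (by first | assumption | (apply Ne.symm; assumption)) m4, mx1⟩, m1⟩,
      ⟨i, h2, h1⟩⟩⟩  -- case (T₂,T₃)
  · refine ⟨U₀, V₀, hCeq1, Or.inl ⟨⟨Function.update (Function.update e p a) q b,
      ⟨e, hE T₁ hT1C (by first | assumption | (apply Ne.symm; assumption)) (by first | assumption | (apply Ne.symm; assumption)) m1,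
        Function.update e q b, hE T₄ hT4C (by first | assumption | (apply Ne.symm; assumption)) (by first | assumption | (apply Ne.symm; assumption)) m4, p, nf2⟩, m2,
      hcol2 i T₁ hT1C (by first | assumption | (apply Ne.symm; assumption)) (by first | assumption | (apply Ne.symm; assumption)) h1 U₀ h2⟩,
      ⟨Function.update e p a, ⟨e, Or.inl (hE T₁ hT1C (by first | assumption | (apply Ne.symm; assumption)) (by first | assumption | (apply Ne.symm; assumption)) m1),
        Function.update (Function.update e p a) q b, Or.inr m2, mx3⟩, m3,
      hcol2 j T₄ hT4C (by first | assumption | (apply Ne.symm; assumption)) (by first | assumption | (apply Ne.symm; assumption)) h4 V₀ h3⟩⟩⟩  -- case (T₂,T₄)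
  · refine ⟨U₀, V₀, hCeq1, Or.inl ⟨⟨Function.update (Function.update e p a) q b,
      ⟨e, hE T₁ hT1C (by first | assumption | (apply Ne.symm; assumption)) (by first | assumption | (apply Ne.symm; assumption)) m1,
        Function.update e p a, hE T₃ hT3C (by first | assumption | (apply Ne.symm; assumption)) (by first | assumption | (apply Ne.symm; assumption)) m3, q, nf1⟩, m2,
      hcol2 i T₁ hT1C (by first | assumption | (apply Ne.symm; assumption)) (by first | assumption | (apply Ne.symm; assumption)) h1 U₀ h2⟩,
      ⟨Function.update e q b, ⟨e, Or.inl (hE T₁ hT1C (by first | assumption | (apply Ne.symm; assumption)) (by first | assumption | (apply Ne.symm; assumption)) m1),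
        Function.update (Function.update e p a) q b, Or.inr m2, mx4⟩, m4,
      hcol2 j T₃ hT3C (by first | assumption | (apply Ne.symm; assumption)) (by first | assumption | (apply Ne.symm; assumption)) h3 V₀ h4⟩⟩⟩  -- case (T₃,T₁)
  · refine ⟨U₀, V₀, hCeq1, Or.inl ⟨⟨Function.update e p a,
      ⟨Function.update (Function.update e p a) q b,
        hE T₂ hT2C (by first | assumption | (apply Ne.symm; assumption)) (by first | assumption | (apply Ne.symm; assumption)) m2,
        Function.update e q b, hE T₄ hT4C (by first | assumption | (apply Ne.symm; assumption)) (by first | assumption | (apply Ne.symm; assumption)) m4, q, nf4⟩, m3,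
      hcol2 j T₄ hT4C (by first | assumption | (apply Ne.symm; assumption)) (by first | assumption | (apply Ne.symm; assumption)) h4 U₀ h3⟩,
      ⟨e, ⟨Function.update e p a, Or.inr m3,
        Function.update e q b, Or.inl (hE T₄ hT4C (by first | assumption | (apply Ne.symm; assumption)) (by first | assumption | (apply Ne.symm; assumption)) m4), mx1⟩, m1,
      hcol2 i T₂ hT2C (by first | assumption | (apply Ne.symm; assumption)) (by first | assumption | (apply Ne.symm; assumption)) h2 V₀ h1⟩⟩⟩  -- case (T₃,T₂)
  · refine ⟨V₀, U₀, hCeq2, Or.inl ⟨⟨Function.update (Function.update e p a) q b,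
      ⟨e, hE T₁ hT1C (by first | assumption | (apply Ne.symm; assumption)) (by first | assumption | (apply Ne.symm; assumption)) m1,
        Function.update e q b, hE T₄ hT4C (by first | assumption | (apply Ne.symm; assumption)) (by first | assumption | (apply Ne.symm; assumption)) m4, p, nf2⟩, m2,
      hcol2 i T₁ hT1C (by first | assumption | (apply Ne.symm; assumption)) (by first | assumption | (apply Ne.symm; assumption)) h1 V₀ h2⟩,
      ⟨Function.update e p a, ⟨e, Or.inl (hE T₁ hT1C (by first | assumption | (apply Ne.symm; assumption)) (by first | assumption | (apply Ne.symm; assumption)) m1),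
        Function.update (Function.update e p a) q b, Or.inr m2, mx3⟩, m3,
      hcol2 j T₄ hT4C (by first | assumption | (apply Ne.symm; assumption)) (by first | assumption | (apply Ne.symm; assumption)) h4 U₀ h3⟩⟩⟩  -- case (T₃,T₄)
  · exact ⟨U₀, V₀, hCeq1, Or.inr ⟨⟨Function.update e p a,
      ⟨e, hE T₁ hT1C (by first | assumption | (apply Ne.symm; assumption)) (by first | assumption | (apply Ne.symm; assumption)) m1,
        Function.update (Function.update e p a) q b, hE T₂ hT2C (by first | assumption | (apply Ne.symm; assumption)) (by first | assumption | (apply Ne.symm; assumption)) m2, mx3⟩, m3⟩,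
      ⟨Function.update e q b, ⟨e, hE T₁ hT1C (by first | assumption | (apply Ne.symm; assumption)) (by first | assumption | (apply Ne.symm; assumption)) m1,
        Function.update (Function.update e p a) q b, hE T₂ hT2C (by first | assumption | (apply Ne.symm; assumption)) (by first | assumption | (apply Ne.symm; assumption)) m2, mx4⟩, m4⟩,
      ⟨j, h3, h4⟩⟩⟩  -- case (T₄,T₁)
  · refine ⟨U₀, V₀, hCeq1, Or.inl ⟨⟨Function.update e q b,
      ⟨Function.update (Function.update e p a) q b,
        hE T₂ hT2C (by first | assumption | (apply Ne.symm; assumption)) (by first | assumption | (apply Ne.symm; assumption)) m2,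
        Function.update e p a, hE T₃ hT3C (by first | assumption | (apply Ne.symm; assumption)) (by first | assumption | (apply Ne.symm; assumption)) m3, p, nf5⟩, m4,
      hcol2 j T₃ hT3C (by first | assumption | (apply Ne.symm; assumption)) (by first | assumption | (apply Ne.symm; assumption)) h3 U₀ h4⟩,
      ⟨e, ⟨Function.update e p a, Or.inl (hE T₃ hT3C (by first | assumption | (apply Ne.symm; assumption)) (by first | assumption | (apply Ne.symm; assumption)) m3),
        Function.update e q b, Or.inr m4, mx1⟩, m1,
      hcol2 i T₂ hT2C (by first | assumption | (apply Ne.symm; assumption)) (by first | assumption | (apply Ne.symm; assumption)) h2 V₀ h1⟩⟩⟩  -- case (T₄,T₂)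
  · refine ⟨V₀, U₀, hCeq2, Or.inl ⟨⟨Function.update (Function.update e p a) q b,
      ⟨e, hE T₁ hT1C (by first | assumption | (apply Ne.symm; assumption)) (by first | assumption | (apply Ne.symm; assumption)) m1,
        Function.update e p a, hE T₃ hT3C (by first | assumption | (apply Ne.symm; assumption)) (by first | assumption | (apply Ne.symm; assumption)) m3, q, nf1⟩, m2,
      hcol2 i T₁ hT1C (by first | assumption | (apply Ne.symm; assumption)) (by first | assumption | (apply Ne.symm; assumption)) h1 V₀ h2⟩,
      ⟨Function.update e q b, ⟨e, Or.inl (hE T₁ hT1C (by first | assumption | (apply Ne.symm; assumption)) (by first | assumption | (apply Ne.symm; assumption)) m1),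
        Function.update (Function.update e p a) q b, Or.inr m2, mx4⟩, m4,
      hcol2 j T₃ hT3C (by first | assumption | (apply Ne.symm; assumption)) (by first | assumption | (apply Ne.symm; assumption)) h3 U₀ h4⟩⟩⟩  -- case (T₄,T₃)
  · exact ⟨V₀, U₀, hCeq2, Or.inr ⟨⟨Function.update e p a,
      ⟨e, hE T₁ hT1C (by first | assumption | (apply Ne.symm; assumption)) (by first | assumption | (apply Ne.symm; assumption)) m1,
        Function.update (Function.update e p a) q b, hE T₂ hT2C (by first | assumption | (apply Ne.symm; assumption)) (by first | assumption | (apply Ne.symm; assumption)) m2, mx3⟩, m3⟩,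
      ⟨Function.update e q b, ⟨e, hE T₁ hT1C (by first | assumption | (apply Ne.symm; assumption)) (by first | assumption | (apply Ne.symm; assumption)) m1,
        Function.update (Function.update e p a) q b, hE T₂ hT2C (by first | assumption | (apply Ne.symm; assumption)) (by first | assumption | (apply Ne.symm; assumption)) m2, mx4⟩, m4⟩,
      ⟨j, h3, h4⟩⟩⟩

end Key42

section Counts

variable {n k : ℕ}

lemma TB_eq (n k : ℕ) : ((k+1) * n^k)^k = (k+1)^k * n^(k^2) := by
  rw [mul_pow, ← pow_mul, pow_two]

set_option maxHeartbeats 1000000 in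
lemma count43 (hk : 2 ≤ k) {T T' T'' : Finset (VHK n k)} {iT iT' iT'' : ColK n}
    (hTT' : T ≠ T') (hTT'' : T ≠ T'') (hT'T'' : T' ≠ T'')
    (hiT : IsTileColK n k iT T) (hiT' : IsTileColK n k iT' T')
    (hiT'' : IsTileColK n k iT'' T'') :
    {C : Finset (Finset (VHK n k)) |
        IsConflictK n k C ∧ C.card = 4 ∧ T ∈ C ∧ T' ∈ C ∧ T'' ∈ C}.ncard
      ≤ ((3*(k+1)^k)^2 * 2^k * (3 * (k+1)^k)) * n^(k^2) := by
  classical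
  set E3 := edgesInK n k T ∪ edgesInK n k T' ∪ edgesInK n k T'' with hE3def
  have hE3 : E3.ncard ≤ 3*(k+1)^k := by
    calc E3.ncard ≤ (edgesInK n k T ∪ edgesInK n k T').ncard + (edgesInK n k T'').ncard :=
        Set.ncard_union_le _ _
      _ ≤ ((edgesInK n k T).ncard + (edgesInK n k T').ncard) + (edgesInK n k T'').ncard := by
        have := Set.ncard_union_le (edgesInK n k T) (edgesInK n k T')
        omega
      _ ≤ 3*(k+1)^k := by
        have h1 := edgesIn_tile_ncard hiT
        have h2 := edgesIn_tile_ncard hiT'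
        have h3 := edgesIn_tile_ncard hiT''
        omega
  set PM := PMixSetK n k E3 with hPMdef
  have hPM : PM.ncard ≤ (3*(k+1)^k)^2 * 2^k := by
    calc PM.ncard ≤ E3.ncard * E3.ncard * 2^k := PMix_bound E3
      _ ≤ (3*(k+1)^k) * (3*(k+1)^k) * 2^k := by
          exact Nat.mul_le_mul (Nat.mul_le_mul hE3 hE3) le_rfl
      _ = (3*(k+1)^k)^2 * 2^k := by rw [pow_two]
  set Q := {U : Finset (VHK n k) | ∃ e' ∈ PM,
    U ∈ (TCsetK n k iT e' ∪ TCsetK n k iT' e' ∪ TCsetK n k iT'' e')} with hQdef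
  have hQ : Q.ncard ≤ PM.ncard * (3 * ((k+1) * n^k)^k) := by
    apply ncard_exists_le PM _ _
    intro e' _
    calc (TCsetK n k iT e' ∪ TCsetK n k iT' e' ∪ TCsetK n k iT'' e').ncard
        ≤ (TCsetK n k iT e' ∪ TCsetK n k iT' e').ncard + (TCsetK n k iT'' e').ncard :=
          Set.ncard_union_le _ _
      _ ≤ ((TCsetK n k iT e').ncard + (TCsetK n k iT' e').ncard)
            + (TCsetK n k iT'' e').ncard := by
          have := Set.ncard_union_le (TCsetK n k iT e') (TCsetK n k iT' e')
          omega
      _ ≤ 3 * ((k+1) * n^k)^k := by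
          have h1 := TC_bound (n := n) (k := k) iT e'
          have h2 := TC_bound (n := n) (k := k) iT' e'
          have h3 := TC_bound (n := n) (k := k) iT'' e'
          omega
  set 𝒮 := {C : Finset (Finset (VHK n k)) |
      IsConflictK n k C ∧ C.card = 4 ∧ T ∈ C ∧ T' ∈ C ∧ T'' ∈ C} with h𝒮def
  have hch : ∀ C : ↥𝒮, ∃ U, C.1 = {T, T', T'', U} ∧ U ∈ Q := by
    intro C
    obtain ⟨hc, h4, hTm, hT'm, hT''m⟩ := C.2
    obtain ⟨U, hU1, e', he1, he2, he3⟩ :=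
      key43 hk hc hTm hT'm hT''m hTT' hTT'' hT'T'' h4 hiT hiT' hiT''
    refine ⟨U, hU1, e', he1, ?_⟩
    rcases he3 with h | h | h
    · exact Or.inl (Or.inl ⟨h, he2⟩)
    · exact Or.inl (Or.inr ⟨h, he2⟩)
    · exact Or.inr ⟨h, he2⟩
  choose Uf hUf1 hUf2 using hch
  have hinj : 𝒮.ncard ≤ Nat.card ↥Q := by
    apply ncard_le_card_of_inj 𝒮 (fun C => (⟨Uf C, hUf2 C⟩ : ↥Q))
    intro C C' h
    have : Uf C = Uf C' := congrArg Subtype.val h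
    apply Subtype.ext
    rw [hUf1 C, hUf1 C', this]
  calc 𝒮.ncard ≤ Nat.card ↥Q := hinj
    _ = Q.ncard := Nat.card_coe_set_eq Q
    _ ≤ PM.ncard * (3 * ((k+1) * n^k)^k) := hQ
    _ ≤ ((3*(k+1)^k)^2 * 2^k) * (3 * ((k+1)^k * n^(k^2))) := by
        rw [TB_eq]
        exact Nat.mul_le_mul hPM le_rfl
    _ = ((3*(k+1)^k)^2 * 2^k * (3 * (k+1)^k)) * n^(k^2) := by ring

end Counts

section Count32

variable {n k : ℕ}

lemma arith1 (hk : 1 ≤ k) (hn : 1 ≤ n) :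
    ((n+1)/2) * (((k+1) * (k * n^(k-1))) * ((k+1) * n^k)^(k-1))
      ≤ ((k+1)^k * k) * n^(k^2) := by
  obtain ⟨k', rfl⟩ : ∃ k', k = k'+1 := ⟨k-1, by omega⟩
  have h2 : (n+1)/2 ≤ n := by omega
  simp only [Nat.add_sub_cancel]
  have hmul : ((k'+1+1) * n^(k'+1))^k' = (k'+2)^k' * n^((k'+1)*k') := by
    rw [mul_pow, ← pow_mul]
  calc ((n+1)/2) * (((k'+1+1) * ((k'+1) * n^k')) * ((k'+1+1) * n^(k'+1))^k')
      ≤ n * (((k'+1+1) * ((k'+1) * n^k')) * ((k'+1+1) * n^(k'+1))^k') := by gcongr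
    _ = ((k'+2)^(k'+1) * (k'+1)) * n^((k'+1)^2) := by
        rw [hmul]
        ring

set_option maxHeartbeats 1000000 in
lemma count32 (hk : 2 ≤ k) (hn : 1 ≤ n) {T T' : Finset (VHK n k)} {iT iT' : ColK n}
    (hTT' : T ≠ T')
    (hiT : IsTileColK n k iT T) (hiT' : IsTileColK n k iT' T') :
    {C : Finset (Finset (VHK n k)) |
        IsConflictK n k C ∧ C.card = 3 ∧ T ∈ C ∧ T' ∈ C}.ncard
      ≤ ((2*(k+1)^k)^2*2^k * (2*(k+1)^k)
          + ((2*(k+1)^k)^2*2^k)^2 * ((k+1)^k * k)) * n^(k^2) := by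
  classical
  have hk1 : 1 ≤ k := by omega
  set E := edgesInK n k T ∪ edgesInK n k T' with hEdef
  have hE : E.ncard ≤ 2*(k+1)^k := by
    have h1 := edgesIn_tile_ncard hiT
    have h2 := edgesIn_tile_ncard hiT'
    have h3 := Set.ncard_union_le (edgesInK n k T) (edgesInK n k T')
    rw [← hEdef] at h3
    omega
  set PM := PMixSetK n k E with hPMdef
  have hPM : PM.ncard ≤ (2*(k+1)^k)^2 * 2^k := by
    calc PM.ncard ≤ E.ncard * E.ncard * 2^k := PMix_bound E
      _ ≤ (2*(k+1)^k) * (2*(k+1)^k) * 2^k :=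
          Nat.mul_le_mul (Nat.mul_le_mul hE hE) le_rfl
      _ = (2*(k+1)^k)^2 * 2^k := by rw [pow_two]
  set Q1 := {U : Finset (VHK n k) | ∃ e' ∈ PM,
    U ∈ (TCsetK n k iT e' ∪ TCsetK n k iT' e')} with hQ1def
  have hQ1 : Q1.ncard ≤ PM.ncard * (2 * ((k+1) * n^k)^k) := by
    apply ncard_exists_le PM _ _
    intro e' _
    have h1 := TC_bound (n := n) (k := k) iT e'
    have h2 := TC_bound (n := n) (k := k) iT' e'
    have := Set.ncard_union_le (TCsetK n k iT e') (TCsetK n k iT' e')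
    omega
  set PP := {ee : (Fin k → Fin n) × (Fin k → Fin n) |
    ee.1 ∈ PM ∧ ee.2 ∈ PM ∧ ee.1 ≠ ee.2} with hPPdef
  have hPP : PP.ncard ≤ PM.ncard * PM.ncard := by
    have key : PP.ncard ≤ Nat.card (↥PM × ↥PM) := by
      apply ncard_le_card_of_inj PP
        (fun ee => ((⟨ee.1.1, ee.2.1⟩ : ↥PM), (⟨ee.1.2, ee.2.2.1⟩ : ↥PM)))
      intro ee ee' h
      simp only [Prod.mk.injEq, Subtype.mk.injEq] at h
      exact Subtype.ext (Prod.ext h.1 h.2)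
    rwa [Nat.card_prod, Nat.card_coe_set_eq] at key
  set P2 : (Fin k → Fin n) × (Fin k → Fin n) → Set (Finset (VHK n k)) := fun ee =>
    {U | IsTileK n k U ∧ Sum.inl (edgeOf n k ee.1) ∈ U ∧ Sum.inl (edgeOf n k ee.2) ∈ U}
    with hP2def
  have hP2 : ∀ ee ∈ PP, (P2 ee).ncard
      ≤ ((n+1)/2) * (((k+1) * (k * n^(k-1))) * ((k+1) * n^k)^(k-1)) := by
    intro ee hee
    have heq : P2 ee = {U : Finset (VHK n k) | ∃ i ∈ (Set.univ : Set (ColK n)),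
        U ∈ TC2setK n k i ee.1 ee.2} := by
      ext U
      simp only [hP2def, Set.mem_setOf_eq, IsTileK, TC2setK, Set.mem_univ, true_and]
      tauto
    rw [heq]
    have := ncard_exists_le (Set.univ : Set (ColK n))
      (fun i => TC2setK n k i ee.1 ee.2)
      (((k+1) * (k * n^(k-1))) * ((k+1) * n^k)^(k-1))
      (fun i _ => TC2_bound i hee.2.2)
    calc _ ≤ (Set.univ : Set (ColK n)).ncard *
          (((k+1) * (k * n^(k-1))) * ((k+1) * n^k)^(k-1)) := this
      _ = ((n+1)/2) * (((k+1) * (k * n^(k-1))) * ((k+1) * n^k)^(k-1)) := by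
          rw [Set.ncard_univ, Nat.card_eq_fintype_card, Fintype.card_fin]
  set Q2 := {U : Finset (VHK n k) | ∃ ee ∈ PP, U ∈ P2 ee} with hQ2def
  have hQ2 : Q2.ncard ≤ PP.ncard *
      (((n+1)/2) * (((k+1) * (k * n^(k-1))) * ((k+1) * n^k)^(k-1))) :=
    ncard_exists_le PP P2 _ hP2
  set 𝒮 := {C : Finset (Finset (VHK n k)) |
      IsConflictK n k C ∧ C.card = 3 ∧ T ∈ C ∧ T' ∈ C} with h𝒮def
  have hch : ∀ C : ↥𝒮, ∃ U, C.1 = {T, T', U} ∧ U ∈ Q1 ∪ Q2 := by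
    intro C
    obtain ⟨hc, h3, hTm, hT'm⟩ := C.2
    obtain ⟨U, hU1, -, -, hbr⟩ := key32 hk hc hTm hT'm hTT' h3 hiT hiT'
    refine ⟨U, hU1, ?_⟩
    rcases hbr with ⟨e', hePM, heU, hcol⟩ | ⟨e', e'', hne, hPM1, hPM2, hU1', hU2', hTile⟩
    · refine Or.inl ⟨e', hePM, ?_⟩
      rcases hcol with h | h
      · exact Or.inl ⟨h, heU⟩
      · exact Or.inr ⟨h, heU⟩
    · exact Or.inr ⟨(e', e''), ⟨hPM1, hPM2, hne⟩, hTile, hU1', hU2'⟩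
  choose Uf hUf1 hUf2 using hch
  have hinj : 𝒮.ncard ≤ Nat.card ↥(Q1 ∪ Q2) := by
    apply ncard_le_card_of_inj 𝒮 (fun C => (⟨Uf C, hUf2 C⟩ : ↥(Q1 ∪ Q2)))
    intro C C' h
    have : Uf C = Uf C' := congrArg Subtype.val h
    apply Subtype.ext
    rw [hUf1 C, hUf1 C', this]
  have harith := arith1 (n := n) (k := k) hk1 hn
  calc 𝒮.ncard ≤ Nat.card ↥(Q1 ∪ Q2) := hinj
    _ = (Q1 ∪ Q2).ncard := Nat.card_coe_set_eq _
    _ ≤ Q1.ncard + Q2.ncard := Set.ncard_union_le _ _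
    _ ≤ PM.ncard * (2 * ((k+1) * n^k)^k) + PP.ncard *
        (((n+1)/2) * (((k+1) * (k * n^(k-1))) * ((k+1) * n^k)^(k-1))) := by
        omega
    _ ≤ ((2*(k+1)^k)^2*2^k) * (2 * ((k+1)^k * n^(k^2)))
        + ((2*(k+1)^k)^2*2^k) * ((2*(k+1)^k)^2*2^k) * (((k+1)^k * k) * n^(k^2)) := by
        rw [TB_eq]
        have hPP' : PP.ncard ≤ ((2*(k+1)^k)^2*2^k) * ((2*(k+1)^k)^2*2^k) :=
          le_trans hPP (Nat.mul_le_mul hPM hPM)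
        exact Nat.add_le_add (Nat.mul_le_mul hPM le_rfl)
          (Nat.mul_le_mul hPP' harith)
    _ = ((2*(k+1)^k)^2*2^k * (2*(k+1)^k)
          + ((2*(k+1)^k)^2*2^k)^2 * ((k+1)^k * k)) * n^(k^2) := by ring

end Count32

section Count42

variable {n k : ℕ}

set_option maxHeartbeats 1000000 in
lemma count42 (hk : 2 ≤ k) (hn : 1 ≤ n) {T T' : Finset (VHK n k)} {iT iT' : ColK n}
    (hTT' : T ≠ T')
    (hiT : IsTileColK n k iT T) (hiT' : IsTileColK n k iT' T') :
    {C : Finset (Finset (VHK n k)) |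
        IsConflictK n k C ∧ C.card = 4 ∧ T ∈ C ∧ T' ∈ C}.ncard
      ≤ (((2*(k+1)^k)^2 * 2^k * k * (2 * (k+1)^k)) * ((3*(k+1)^k)^2 * 2^k * (2 * (k+1)^k))
          + ((2*(k+1)^k)^2 * 2^k)^2 * ((k+1)^k)^2) * n^(2*k^2+1) := by
  classical
  have hk1 : 1 ≤ k := by omega
  set A := (k+1)^k with hAdef
  set E := edgesInK n k T ∪ edgesInK n k T' with hEdef
  have hE : E.ncard ≤ 2*A := by
    have h1 := edgesIn_tile_ncard hiT
    have h2 := edgesIn_tile_ncard hiT'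
    have h3 := Set.ncard_union_le (edgesInK n k T) (edgesInK n k T')
    rw [← hEdef] at h3
    omega
  set PM := PMixSetK n k E with hPMdef
  have hPM : PM.ncard ≤ (2*A)^2 * 2^k := by
    calc PM.ncard ≤ E.ncard * E.ncard * 2^k := PMix_bound E
      _ ≤ (2*A) * (2*A) * 2^k := Nat.mul_le_mul (Nat.mul_le_mul hE hE) le_rfl
      _ = (2*A)^2 * 2^k := by rw [pow_two]
  set NM := NMixSetK n k E with hNMdef
  have hNM : NM.ncard ≤ (2*A)^2 * 2^k * (k*n) := by
    calc NM.ncard ≤ E.ncard * E.ncard * 2^k * (k*n) := NMix_bound E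
      _ ≤ (2*A) * (2*A) * 2^k * (k*n) :=
          Nat.mul_le_mul (Nat.mul_le_mul (Nat.mul_le_mul hE hE) le_rfl) le_rfl
      _ = (2*A)^2 * 2^k * (k*n) := by rw [pow_two]
  set QA := {UV : Finset (VHK n k) × Finset (VHK n k) |
    (∃ e' ∈ NM, e' ∈ edgesInK n k UV.1 ∧
      (IsTileColK n k iT UV.1 ∨ IsTileColK n k iT' UV.1)) ∧
    (∃ e'' ∈ PMixSetK n k (E ∪ edgesInK n k UV.1), e'' ∈ edgesInK n k UV.2 ∧
      (IsTileColK n k iT UV.2 ∨ IsTileColK n k iT' UV.2))} with hQAdef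
  set tA := {U : Finset (VHK n k) | ∃ e' ∈ NM,
    U ∈ (TCsetK n k iT e' ∪ TCsetK n k iT' e')} with htAdef
  have htA : tA.ncard ≤ NM.ncard * (2 * ((k+1) * n^k)^k) := by
    apply ncard_exists_le NM _ _
    intro e' _
    have h1 := TC_bound (n := n) (k := k) iT e'
    have h2 := TC_bound (n := n) (k := k) iT' e'
    have := Set.ncard_union_le (TCsetK n k iT e') (TCsetK n k iT' e')
    omega
  have hQA : QA.ncard ≤ tA.ncard * (((3*A)^2 * 2^k) * (2 * ((k+1) * n^k)^k)) := by
    apply ncard_pairs_le QA tA _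
    · intro UV hUV
      obtain ⟨⟨e', he, heU, hcol⟩, -⟩ := hUV
      refine ⟨e', he, ?_⟩
      rcases hcol with h | h
      · exact Or.inl ⟨h, heU⟩
      · exact Or.inr ⟨h, heU⟩
    · intro U hU
      have hUtile : IsTileColK n k iT U ∨ IsTileColK n k iT' U := by
        obtain ⟨e', -, hmem⟩ := hU
        rcases hmem with h | h
        · exact Or.inl h.1
        · exact Or.inr h.1
      have hEU : (E ∪ edgesInK n k U).ncard ≤ 3*A := by
        have h1 : (edgesInK n k U).ncard ≤ A := by
          rcases hUtile with h | h
          · exact edgesIn_tile_ncard h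
          · exact edgesIn_tile_ncard h
        have h3 := Set.ncard_union_le E (edgesInK n k U)
        omega
      have hPM' : (PMixSetK n k (E ∪ edgesInK n k U)).ncard ≤ (3*A)^2 * 2^k := by
        calc (PMixSetK n k (E ∪ edgesInK n k U)).ncard
            ≤ (E ∪ edgesInK n k U).ncard * (E ∪ edgesInK n k U).ncard * 2^k :=
              PMix_bound _
          _ ≤ (3*A) * (3*A) * 2^k := Nat.mul_le_mul (Nat.mul_le_mul hEU hEU) le_rfl
          _ = (3*A)^2 * 2^k := by rw [pow_two]
      calc {V | (U, V) ∈ QA}.ncard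
          ≤ {V : Finset (VHK n k) | ∃ e'' ∈ PMixSetK n k (E ∪ edgesInK n k U),
              V ∈ (TCsetK n k iT e'' ∪ TCsetK n k iT' e'')}.ncard := by
            apply Set.ncard_le_ncard _ (Set.toFinite _)
            intro V hV
            obtain ⟨-, e'', he, heV, hcol⟩ := hV
            refine ⟨e'', he, ?_⟩
            rcases hcol with h | h
            · exact Or.inl ⟨h, heV⟩
            · exact Or.inr ⟨h, heV⟩
        _ ≤ (PMixSetK n k (E ∪ edgesInK n k U)).ncard * (2 * ((k+1) * n^k)^k) := by
            apply ncard_exists_le _ _ _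
            intro e'' _
            have h1 := TC_bound (n := n) (k := k) iT e''
            have h2 := TC_bound (n := n) (k := k) iT' e''
            have := Set.ncard_union_le (TCsetK n k iT e'') (TCsetK n k iT' e'')
            omega
        _ ≤ ((3*A)^2 * 2^k) * (2 * ((k+1) * n^k)^k) := Nat.mul_le_mul hPM' le_rfl
  set QB := {UV : Finset (VHK n k) × Finset (VHK n k) |
    (∃ e' ∈ PM, e' ∈ edgesInK n k UV.1) ∧ (∃ e'' ∈ PM, e'' ∈ edgesInK n k UV.2) ∧
    (∃ c, IsTileColK n k c UV.1 ∧ IsTileColK n k c UV.2)} with hQBdef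
  set tB := {U : Finset (VHK n k) | ∃ e' ∈ PM,
    U ∈ {W : Finset (VHK n k) | IsTileK n k W ∧ Sum.inl (edgeOf n k e') ∈ W}} with htBdef
  have htB : tB.ncard ≤ PM.ncard * (((n+1)/2) * ((k+1) * n^k)^k) := by
    apply ncard_exists_le PM _ _
    intro e' _
    have heq : {W : Finset (VHK n k) | IsTileK n k W ∧ Sum.inl (edgeOf n k e') ∈ W}
        = {W : Finset (VHK n k) | ∃ i ∈ (Set.univ : Set (ColK n)),
            W ∈ TCsetK n k i e'} := by
      ext W
      simp only [Set.mem_setOf_eq, IsTileK, TCsetK, Set.mem_univ, true_and]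
      tauto
    rw [heq]
    calc _ ≤ (Set.univ : Set (ColK n)).ncard * ((k+1) * n^k)^k :=
        ncard_exists_le _ _ _ (fun i _ => TC_bound i e')
      _ = ((n+1)/2) * ((k+1) * n^k)^k := by
          rw [Set.ncard_univ, Nat.card_eq_fintype_card, Fintype.card_fin]
  have hQB : QB.ncard ≤ tB.ncard * (PM.ncard * ((k+1) * n^k)^k) := by
    apply ncard_pairs_le QB tB _
    · intro UV hUV
      obtain ⟨⟨e', he, heU⟩, -, ⟨c, hc1, hc2⟩⟩ := hUV
      exact ⟨e', he, ⟨c, hc1⟩, heU⟩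
    · intro U hU
      obtain ⟨e0, -, hUtile, -⟩ := hU
      obtain ⟨cU, hcU⟩ := hUtile
      calc {V | (U, V) ∈ QB}.ncard
          ≤ {V : Finset (VHK n k) | ∃ e'' ∈ PM, V ∈ TCsetK n k cU e''}.ncard := by
            apply Set.ncard_le_ncard _ (Set.toFinite _)
            intro V hV
            obtain ⟨-, ⟨e'', he, heV⟩, ⟨c, hc1, hc2⟩⟩ := hV
            have : c = cU := tileCol_unique hk1 hc1 hcU
            rw [this] at hc2
            exact ⟨e'', he, hc2, heV⟩
        _ ≤ PM.ncard * ((k+1) * n^k)^k :=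
            ncard_exists_le _ _ _ (fun e'' _ => TC_bound cU e'')
  set 𝒮 := {C : Finset (Finset (VHK n k)) |
      IsConflictK n k C ∧ C.card = 4 ∧ T ∈ C ∧ T' ∈ C} with h𝒮def
  have hch : ∀ C : ↥𝒮, ∃ UV : Finset (VHK n k) × Finset (VHK n k),
      C.1 = {T, T', UV.1, UV.2} ∧ UV ∈ QA ∪ QB := by
    intro C
    obtain ⟨hc, h4, hTm, hT'm⟩ := C.2
    obtain ⟨U, V, hUV1, hbr⟩ := key42 hk hc hTm hT'm hTT' h4 hiT hiT'
    refine ⟨(U, V), hUV1, ?_⟩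
    rcases hbr with ⟨hA1, hA2⟩ | ⟨hB1, hB2, hB3⟩
    · exact Or.inl ⟨hA1, hA2⟩
    · exact Or.inr ⟨hB1, hB2, hB3⟩
  choose UVf hUVf1 hUVf2 using hch
  have hinj : 𝒮.ncard ≤ Nat.card ↥(QA ∪ QB) := by
    apply ncard_le_card_of_inj 𝒮 (fun C => (⟨UVf C, hUVf2 C⟩ : ↥(QA ∪ QB)))
    intro C C' h
    have : UVf C = UVf C' := congrArg Subtype.val h
    apply Subtype.ext
    rw [hUVf1 C, hUVf1 C', this]
  have hhalf : (n+1)/2 ≤ n := by omega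
  have hTBeq : ((k+1) * n^k)^k = A * n^(k^2) := TB_eq n k
  calc 𝒮.ncard ≤ Nat.card ↥(QA ∪ QB) := hinj
    _ = (QA ∪ QB).ncard := Nat.card_coe_set_eq _
    _ ≤ QA.ncard + QB.ncard := Set.ncard_union_le _ _
    _ ≤ (NM.ncard * (2 * ((k+1) * n^k)^k)) * (((3*A)^2 * 2^k) * (2 * ((k+1) * n^k)^k))
        + (PM.ncard * (((n+1)/2) * ((k+1) * n^k)^k)) * (PM.ncard * ((k+1) * n^k)^k) := by
        have hqa := le_trans hQA (Nat.mul_le_mul htA le_rfl)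
        have hqb := le_trans hQB (Nat.mul_le_mul htB le_rfl)
        omega
    _ ≤ (((2*A)^2 * 2^k * (k*n)) * (2 * (A * n^(k^2))))
          * (((3*A)^2 * 2^k) * (2 * (A * n^(k^2))))
        + (((2*A)^2 * 2^k) * (n * (A * n^(k^2))))
          * (((2*A)^2 * 2^k) * (A * n^(k^2))) := by
        rw [hTBeq] at *
        gcongr
    _ = (((2*A)^2 * 2^k * k * (2 * A)) * ((3*A)^2 * 2^k * (2 * A))
          + ((2*A)^2 * 2^k)^2 * A^2) * (n * n^(k^2) * n^(k^2)) := by ring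
    _ = (((2*A)^2 * 2^k * k * (2 * A)) * ((3*A)^2 * 2^k * (2 * A))
          + ((2*A)^2 * 2^k)^2 * A^2) * n^(2*k^2+1) := by
        congr 1
        rw [two_mul, pow_add, pow_succ]
        ring

end Count42

set_option maxHeartbeats 2000000 in
/-- In the auxiliary hypergraph `H₁` built from `K^{(k)}_{n,…,n}` (with `k ≥ 2`), with
`d = n^{k²+1}/2` there is a constant `c` depending only on `k` such that: every pair of
distinct tiles of `H₁` lies in at most `c·d/n` conflicts of `𝒞` of size 3 and in at most
`c·d²/n` conflicts of `𝒞` of size 4, and every triple of distinct tiles of `H₁` lies in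
at most `c·d/n` conflicts of `𝒞` of size 4; in particular,
`Δ_{j'}(𝒞^{(j)}) ≤ d^{j−j'−ε}` for all `j ∈ {3,4}`, `2 ≤ j' ≤ j−1`, any
`ε ∈ (0, 1/(k²+2))`, and sufficiently large `n`. -/
theorem stmt19 (k : ℕ) (hk : 2 ≤ k) :
    (∃ c : ℝ, 0 < c ∧ ∀ n : ℕ, 1 ≤ n →
      (∀ T T' : Finset (VHK n k), IsTileK n k T → IsTileK n k T' → T ≠ T' →
        ({C : Finset (Finset (VHK n k)) |
            IsConflictK n k C ∧ C.card = 3 ∧ T ∈ C ∧ T' ∈ C}.ncard : ℝ) ≤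
          c * ((n : ℝ) ^ (k ^ 2 + 1) / 2) / n ∧
        ({C : Finset (Finset (VHK n k)) |
            IsConflictK n k C ∧ C.card = 4 ∧ T ∈ C ∧ T' ∈ C}.ncard : ℝ) ≤
          c * ((n : ℝ) ^ (k ^ 2 + 1) / 2) ^ 2 / n) ∧
      (∀ T T' T'' : Finset (VHK n k), IsTileK n k T → IsTileK n k T' →
        IsTileK n k T'' → T ≠ T' → T ≠ T'' → T' ≠ T'' →
        ({C : Finset (Finset (VHK n k)) |
            IsConflictK n k C ∧ C.card = 4 ∧ T ∈ C ∧ T' ∈ C ∧ T'' ∈ C}.ncard : ℝ) ≤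
          c * ((n : ℝ) ^ (k ^ 2 + 1) / 2) / n)) ∧
    ∀ ε : ℝ, 0 < ε → ε < 1 / (k ^ 2 + 2) → ∃ n₀ : ℕ, ∀ n : ℕ, n₀ ≤ n →
      ∀ j j' : ℕ, (j = 3 ∨ j = 4) → 2 ≤ j' → j' ≤ j - 1 →
        ∀ F : Finset (Finset (VHK n k)), F.card = j' → (∀ T ∈ F, IsTileK n k T) →
          ({C : Finset (Finset (VHK n k)) |
              IsConflictK n k C ∧ C.card = j ∧ F ⊆ C}.ncard : ℝ) ≤
            ((n : ℝ) ^ (k ^ 2 + 1) / 2) ^ ((j : ℝ) - (j' : ℝ) - ε) := by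
  classical
  set C32 : ℕ := (2*(k+1)^k)^2*2^k * (2*(k+1)^k)
      + ((2*(k+1)^k)^2*2^k)^2 * ((k+1)^k * k) with hC32def
  set C42 : ℕ := ((2*(k+1)^k)^2 * 2^k * k * (2 * (k+1)^k))
      * ((3*(k+1)^k)^2 * 2^k * (2 * (k+1)^k))
      + ((2*(k+1)^k)^2 * 2^k)^2 * ((k+1)^k)^2 with hC42def
  set C43 : ℕ := (3*(k+1)^k)^2 * 2^k * (3 * (k+1)^k) with hC43def
  set c : ℝ := 2*(C32:ℝ) + 4*(C42:ℝ) + 2*(C43:ℝ) + 1 with hcdef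
  have hcpos : 0 < c := by positivity
  have hc32c : 2*(C32:ℝ) ≤ c := by
    have h1 : (0:ℝ) ≤ (C42:ℝ) := Nat.cast_nonneg _
    have h2 : (0:ℝ) ≤ (C43:ℝ) := Nat.cast_nonneg _
    rw [hcdef]; linarith
  have hc42c : 4*(C42:ℝ) ≤ c := by
    have h1 : (0:ℝ) ≤ (C32:ℝ) := Nat.cast_nonneg _
    have h2 : (0:ℝ) ≤ (C43:ℝ) := Nat.cast_nonneg _
    rw [hcdef]; linarith
  have hc43c : 2*(C43:ℝ) ≤ c := by
    have h1 : (0:ℝ) ≤ (C32:ℝ) := Nat.cast_nonneg _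
    have h2 : (0:ℝ) ≤ (C42:ℝ) := Nat.cast_nonneg _
    rw [hcdef]; linarith
  have hb3 : ∀ n : ℕ, 1 ≤ n → ∀ T T' : Finset (VHK n k), IsTileK n k T →
      IsTileK n k T' → T ≠ T' →
      ({C : Finset (Finset (VHK n k)) |
          IsConflictK n k C ∧ C.card = 3 ∧ T ∈ C ∧ T' ∈ C}.ncard : ℝ) ≤
        c * ((n : ℝ) ^ (k ^ 2 + 1) / 2) / n := by
    intro n hn T T' hT hT' hne
    obtain ⟨iT, hiT⟩ := hT
    obtain ⟨iT', hiT'⟩ := hT'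
    have hcount := count32 hk hn hne hiT hiT'
    have hn0 : (0:ℝ) < n := by exact_mod_cast hn
    have hcast : ({C : Finset (Finset (VHK n k)) |
        IsConflictK n k C ∧ C.card = 3 ∧ T ∈ C ∧ T' ∈ C}.ncard : ℝ)
        ≤ (C32 : ℝ) * (n:ℝ)^(k^2) := by
      calc ({C : Finset (Finset (VHK n k)) |
          IsConflictK n k C ∧ C.card = 3 ∧ T ∈ C ∧ T' ∈ C}.ncard : ℝ)
          ≤ ((C32 * n^(k^2) : ℕ) : ℝ) := Nat.cast_le.mpr hcount
        _ = (C32:ℝ) * (n:ℝ)^(k^2) := by push_cast; ring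
    have hsim : c * ((n:ℝ)^(k^2+1)/2)/n = c * (n:ℝ)^(k^2)/2 := by
      rw [pow_succ]
      field_simp
    rw [hsim]
    have hpn : (0:ℝ) ≤ (n:ℝ)^(k^2) := by positivity
    nlinarith [hcast]
  have hb4p : ∀ n : ℕ, 1 ≤ n → ∀ T T' : Finset (VHK n k), IsTileK n k T →
      IsTileK n k T' → T ≠ T' →
      ({C : Finset (Finset (VHK n k)) |
          IsConflictK n k C ∧ C.card = 4 ∧ T ∈ C ∧ T' ∈ C}.ncard : ℝ) ≤
        c * ((n : ℝ) ^ (k ^ 2 + 1) / 2) ^ 2 / n := by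
    intro n hn T T' hT hT' hne
    obtain ⟨iT, hiT⟩ := hT
    obtain ⟨iT', hiT'⟩ := hT'
    have hcount := count42 hk hn hne hiT hiT'
    have hn0 : (0:ℝ) < n := by exact_mod_cast hn
    have hcast : ({C : Finset (Finset (VHK n k)) |
        IsConflictK n k C ∧ C.card = 4 ∧ T ∈ C ∧ T' ∈ C}.ncard : ℝ)
        ≤ (C42 : ℝ) * (n:ℝ)^(2*k^2+1) := by
      calc ({C : Finset (Finset (VHK n k)) |
          IsConflictK n k C ∧ C.card = 4 ∧ T ∈ C ∧ T' ∈ C}.ncard : ℝ)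
          ≤ ((C42 * n^(2*k^2+1) : ℕ) : ℝ) := Nat.cast_le.mpr hcount
        _ = (C42:ℝ) * (n:ℝ)^(2*k^2+1) := by push_cast; ring
    have hsim : c * ((n:ℝ)^(k^2+1)/2)^2/n = c * (n:ℝ)^(2*k^2+1)/4 := by
      have h1 : ((n:ℝ)^(k^2+1))^2 = (n:ℝ)^(2*k^2+1) * n := by
        rw [← pow_mul, ← pow_succ]
        congr 1
        ring
      rw [div_pow, h1]
      field_simp
      ring
    rw [hsim]
    have hpn : (0:ℝ) ≤ (n:ℝ)^(2*k^2+1) := by positivity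
    nlinarith [hcast]
  have hb4t : ∀ n : ℕ, 1 ≤ n → ∀ T T' T'' : Finset (VHK n k), IsTileK n k T →
      IsTileK n k T' → IsTileK n k T'' → T ≠ T' → T ≠ T'' → T' ≠ T'' →
      ({C : Finset (Finset (VHK n k)) |
          IsConflictK n k C ∧ C.card = 4 ∧ T ∈ C ∧ T' ∈ C ∧ T'' ∈ C}.ncard : ℝ) ≤
        c * ((n : ℝ) ^ (k ^ 2 + 1) / 2) / n := by
    intro n hn T T' T'' hT hT' hT'' hne1 hne2 hne3
    obtain ⟨iT, hiT⟩ := hT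
    obtain ⟨iT', hiT'⟩ := hT'
    obtain ⟨iT'', hiT''⟩ := hT''
    have hcount := count43 hk hne1 hne2 hne3 hiT hiT' hiT''
    have hn0 : (0:ℝ) < n := by exact_mod_cast hn
    have hcast : ({C : Finset (Finset (VHK n k)) |
        IsConflictK n k C ∧ C.card = 4 ∧ T ∈ C ∧ T' ∈ C ∧ T'' ∈ C}.ncard : ℝ)
        ≤ (C43 : ℝ) * (n:ℝ)^(k^2) := by
      calc ({C : Finset (Finset (VHK n k)) |
          IsConflictK n k C ∧ C.card = 4 ∧ T ∈ C ∧ T' ∈ C ∧ T'' ∈ C}.ncard : ℝ)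
          ≤ ((C43 * n^(k^2) : ℕ) : ℝ) := Nat.cast_le.mpr hcount
        _ = (C43:ℝ) * (n:ℝ)^(k^2) := by push_cast; ring
    have hsim : c * ((n:ℝ)^(k^2+1)/2)/n = c * (n:ℝ)^(k^2)/2 := by
      rw [pow_succ]
      field_simp
    rw [hsim]
    have hpn : (0:ℝ) ≤ (n:ℝ)^(k^2) := by positivity
    nlinarith [hcast]
  constructor
  · exact ⟨c, hcpos, fun n hn =>
      ⟨fun T T' hT hT' hne => ⟨hb3 n hn T T' hT hT' hne, hb4p n hn T T' hT hT' hne⟩,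
       fun T T' T'' hT hT' hT'' h1 h2 h3 => hb4t n hn T T' T'' hT hT' hT'' h1 h2 h3⟩⟩
  · intro ε hε0 hε1
    set δ : ℝ := 1 - ((k^2+1 : ℕ) : ℝ) * ε with hδdef
    have hKpos : (0:ℝ) < ((k^2+1 : ℕ) : ℝ) := by positivity
    have hδpos : 0 < δ := by
      have hcast : ((k^2+1 : ℕ) : ℝ) = (k:ℝ)^2 + 1 := by push_cast; ring
      have hden : (0:ℝ) < (k:ℝ)^2 + 2 := by positivity
      have h1 : ((k^2+1 : ℕ) : ℝ) * ε < ((k:ℝ)^2 + 1) * (1/((k:ℝ)^2+2)) := by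
        rw [hcast]
        apply mul_lt_mul_of_pos_left hε1
        positivity
      have h2 : ((k:ℝ)^2 + 1) * (1/((k:ℝ)^2+2)) < 1 := by
        rw [mul_one_div, div_lt_one hden]
        linarith
      rw [hδdef]
      linarith
    refine ⟨max 1 (⌈c ^ (1/δ)⌉₊ + 1), ?_⟩
    intro n hn j j' hj hj2 hj1 F hFcard hFt
    have hn1 : 1 ≤ n := le_trans (le_max_left _ _) hn
    have hnR : (1:ℝ) ≤ (n:ℝ) := by exact_mod_cast hn1
    have hn0 : (0:ℝ) < (n:ℝ) := by linarith
    have hnc : c^(1/δ) ≤ (n:ℝ) := by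
      have h1 : ⌈c ^ (1/δ)⌉₊ + 1 ≤ n := le_trans (le_max_right _ _) hn
      calc c^(1/δ) ≤ (⌈c ^ (1/δ)⌉₊ : ℝ) := Nat.le_ceil _
        _ ≤ (n : ℝ) := by exact_mod_cast le_trans (Nat.le_succ _) h1
    set D : ℝ := (n:ℝ)^(k^2+1)/2 with hDdef
    have hDpos : 0 < D := by
      rw [hDdef]
      exact div_pos (pow_pos hn0 _) two_pos
    have hDe : c * D^ε ≤ (n:ℝ) := by
      have h2 : D ≤ (n:ℝ)^(k^2+1) := by
        rw [hDdef]
        have : (0:ℝ) ≤ (n:ℝ)^(k^2+1) := by positivity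
        linarith
      have h3 : D^ε ≤ ((n:ℝ)^(k^2+1))^ε :=
        Real.rpow_le_rpow (le_of_lt hDpos) h2 (le_of_lt hε0)
      have h4 : ((n:ℝ)^(k^2+1))^ε = (n:ℝ) ^ (((k^2+1:ℕ):ℝ) * ε) := by
        rw [← Real.rpow_natCast (n:ℝ) (k^2+1), ← Real.rpow_mul (le_of_lt hn0)]
      have h5 : c ≤ (n:ℝ)^δ := by
        have h6 : (c^(1/δ))^δ ≤ (n:ℝ)^δ :=
          Real.rpow_le_rpow (Real.rpow_nonneg (le_of_lt hcpos) _) hnc (le_of_lt hδpos)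
        rwa [← Real.rpow_mul (le_of_lt hcpos) (1/δ) δ,
          one_div_mul_cancel (ne_of_gt hδpos), Real.rpow_one] at h6
      have hfirst : c * D^ε ≤ (n:ℝ)^δ * (n:ℝ)^(((k^2+1:ℕ):ℝ) * ε) := by
        apply mul_le_mul h5 (h3.trans (le_of_eq h4))
          (Real.rpow_nonneg (le_of_lt hDpos) _) (Real.rpow_nonneg (by linarith) _)
      calc c * D^ε ≤ (n:ℝ)^δ * (n:ℝ)^(((k^2+1:ℕ):ℝ) * ε) := hfirst
        _ = (n:ℝ)^(δ + ((k^2+1:ℕ):ℝ)*ε) := (Real.rpow_add hn0 _ _).symm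
        _ = (n:ℝ)^(1:ℝ) := by
            congr 1
            rw [hδdef]
            ring
        _ = (n:ℝ) := Real.rpow_one _
    have hDε0 : (0:ℝ) < D^ε := Real.rpow_pos_of_pos hDpos ε
    have hstep1 : c * D / n ≤ D ^ ((1:ℝ) - ε) := by
      have heq : D^((1:ℝ)-ε) = D/D^ε := by
        rw [Real.rpow_sub hDpos, Real.rpow_one]
      rw [heq, div_le_div_iff₀ hn0 hDε0]
      nlinarith [hDe, hDpos.le, hDε0.le]
    have hstep2 : c * D^2 / n ≤ D ^ ((2:ℝ) - ε) := by
      have heq : D^((2:ℝ)-ε) = D^2/D^ε := by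
        rw [Real.rpow_sub hDpos]
        congr 1
        rw [← Real.rpow_natCast D 2]
        norm_num
      rw [heq, div_le_div_iff₀ hn0 hDε0]
      have hD2 : (0:ℝ) ≤ D^2 := by positivity
      nlinarith [hDe, hD2, hDε0.le]
    rcases hj with rfl | rfl
    · -- j = 3, j' = 2
      have hj'2 : j' = 2 := by omega
      subst hj'2
      obtain ⟨T, T', hne, rfl⟩ := Finset.card_eq_two.mp hFcard
      have hTt : IsTileK n k T := hFt T (by simp)
      have hT't : IsTileK n k T' := hFt T' (by simp)
      have hsub : {C : Finset (Finset (VHK n k)) |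
          IsConflictK n k C ∧ C.card = 3 ∧ ({T, T'} : Finset (Finset (VHK n k))) ⊆ C}
          ⊆ {C : Finset (Finset (VHK n k)) |
          IsConflictK n k C ∧ C.card = 3 ∧ T ∈ C ∧ T' ∈ C} := by
        intro C hC
        obtain ⟨h1, h2, h3⟩ := hC
        exact ⟨h1, h2, h3 (by simp), h3 (by simp)⟩
      have hmono := Set.ncard_le_ncard hsub (Set.toFinite _)
      have hexp : ((3:ℕ):ℝ) - ((2:ℕ):ℝ) - ε = 1 - ε := by push_cast; ring
      rw [hexp]
      calc ({C : Finset (Finset (VHK n k)) |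
            IsConflictK n k C ∧ C.card = 3 ∧ ({T, T'} : Finset (Finset (VHK n k))) ⊆ C}.ncard : ℝ)
          ≤ ({C : Finset (Finset (VHK n k)) |
            IsConflictK n k C ∧ C.card = 3 ∧ T ∈ C ∧ T' ∈ C}.ncard : ℝ) :=
            Nat.cast_le.mpr hmono
        _ ≤ c * D / n := hb3 n hn1 T T' hTt hT't hne
        _ ≤ D ^ ((1:ℝ) - ε) := hstep1
    · -- j = 4, j' = 2 or 3
      have hj' : j' = 2 ∨ j' = 3 := by omega
      rcases hj' with rfl | rfl
      · obtain ⟨T, T', hne, rfl⟩ := Finset.card_eq_two.mp hFcard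
        have hTt : IsTileK n k T := hFt T (by simp)
        have hT't : IsTileK n k T' := hFt T' (by simp)
        have hsub : {C : Finset (Finset (VHK n k)) |
            IsConflictK n k C ∧ C.card = 4 ∧ ({T, T'} : Finset (Finset (VHK n k))) ⊆ C}
            ⊆ {C : Finset (Finset (VHK n k)) |
            IsConflictK n k C ∧ C.card = 4 ∧ T ∈ C ∧ T' ∈ C} := by
          intro C hC
          obtain ⟨h1, h2, h3⟩ := hC
          exact ⟨h1, h2, h3 (by simp), h3 (by simp)⟩
        have hmono := Set.ncard_le_ncard hsub (Set.toFinite _)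
        have hexp : ((4:ℕ):ℝ) - ((2:ℕ):ℝ) - ε = 2 - ε := by push_cast; ring
        rw [hexp]
        calc ({C : Finset (Finset (VHK n k)) |
              IsConflictK n k C ∧ C.card = 4 ∧ ({T, T'} : Finset (Finset (VHK n k))) ⊆ C}.ncard : ℝ)
            ≤ ({C : Finset (Finset (VHK n k)) |
              IsConflictK n k C ∧ C.card = 4 ∧ T ∈ C ∧ T' ∈ C}.ncard : ℝ) :=
              Nat.cast_le.mpr hmono
          _ ≤ c * D ^ 2 / n := hb4p n hn1 T T' hTt hT't hne
          _ ≤ D ^ ((2:ℝ) - ε) := hstep2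
      · obtain ⟨T, T', T'', hne1, hne2, hne3, rfl⟩ := Finset.card_eq_three.mp hFcard
        have hTt : IsTileK n k T := hFt T (by simp)
        have hT't : IsTileK n k T' := hFt T' (by simp)
        have hT''t : IsTileK n k T'' := hFt T'' (by simp)
        have hsub : {C : Finset (Finset (VHK n k)) |
            IsConflictK n k C ∧ C.card = 4 ∧
              ({T, T', T''} : Finset (Finset (VHK n k))) ⊆ C}
            ⊆ {C : Finset (Finset (VHK n k)) |
            IsConflictK n k C ∧ C.card = 4 ∧ T ∈ C ∧ T' ∈ C ∧ T'' ∈ C} := by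
          intro C hC
          obtain ⟨h1, h2, h3⟩ := hC
          exact ⟨h1, h2, h3 (by simp), h3 (by simp), h3 (by simp)⟩
        have hmono := Set.ncard_le_ncard hsub (Set.toFinite _)
        have hexp : ((4:ℕ):ℝ) - ((3:ℕ):ℝ) - ε = 1 - ε := by push_cast; ring
        rw [hexp]
        calc ({C : Finset (Finset (VHK n k)) |
              IsConflictK n k C ∧ C.card = 4 ∧
                ({T, T', T''} : Finset (Finset (VHK n k))) ⊆ C}.ncard : ℝ)
            ≤ ({C : Finset (Finset (VHK n k)) |
              IsConflictK n k C ∧ C.card = 4 ∧ T ∈ C ∧ T' ∈ C ∧ T'' ∈ C}.ncard : ℝ) :=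
              Nat.cast_le.mpr hmono
          _ ≤ c * D / n := hb4t n hn1 T T' T'' hTt hT't hT''t hne1 hne2 hne3
          _ ≤ D ^ ((1:ℝ) - ε) := hstep1
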